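/- arXiv:2209.07698 — 5 statements merged into one kernel-verified Lean document; each statement's English description precedes it below -/
import Mathlib

section
/- Let X_1, X_2, ... be i.i.d. uniform random variables on {1,2,3,4,5,6}, S_n = X_1 + ... + X_n, and τ = min{n ≥ 1 : S_n is prime}. Then τ is finite almost surely. -/
open MeasureTheory ProbabilityTheory
open scoped ENNReal NNReal

/-- Sum of the first `n` dice. -/
def diceSum {Ω : Type*} (X : ℕ → Ω → ℕ) (n : ℕ) (ω : Ω) : ℕ :=
  ∑ i ∈ Finset.range n, X i ω

/-- `p(k,n)`: probability that `S_k = n` and `S_i` is not prime for all `1 ≤ i < k`. -/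
noncomputable def hitProb {Ω : Type*} [MeasurableSpace Ω] (μ : Measure Ω)
    (X : ℕ → Ω → ℕ) (k n : ℕ) : ℝ :=
  (μ {ω | diceSum X k ω = n ∧ ∀ i, 1 ≤ i → i < k → ¬ (diceSum X i ω).Prime}).toReal

namespace TauAux

lemma cast_div (a b : ℕ) (hb : b ≠ 0) : ((a:ℝ≥0∞)/b) = ((a/b : ℝ≥0) : ℝ≥0∞) := by
  rw [ENNReal.coe_div (by exact_mod_cast hb)]; norm_num

lemma enn_arith (a b : ℕ) (h : 6 * a ≤ 5 * b) :
    ((a:ℝ≥0∞))*(1/6) ≤ (b:ℝ≥0∞)*(1/6)*(5/6) := by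
  have h1 := cast_div 1 6 (by norm_num); have h5 := cast_div 5 6 (by norm_num)
  push_cast at h1 h5
  rw [h1, h5, show ((a:ℝ≥0∞)) = ((a:ℝ≥0):ℝ≥0∞) by norm_num,
    show ((b:ℝ≥0∞)) = ((b:ℝ≥0):ℝ≥0∞) by norm_num,
    ← ENNReal.coe_mul, ← ENNReal.coe_mul, ← ENNReal.coe_mul, ENNReal.coe_le_coe,
    ← NNReal.coe_le_coe]
  push_cast
  have h' : (6:ℝ) * a ≤ 5 * b := by exact_mod_cast h
  nlinarith

lemma enn_lt_one : (5/6 : ℝ≥0∞) < 1 := by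
  have := cast_div 5 6 (by norm_num); push_cast at this
  rw [this, ← ENNReal.coe_one, ENNReal.coe_lt_coe, ← NNReal.coe_lt_coe]
  push_cast; norm_num

variable {Ω : Type*} [MeasurableSpace Ω]

lemma dice_mono (X : ℕ → Ω → ℕ) {i j : ℕ} (h : i ≤ j) (ω : Ω) :
    diceSum X i ω ≤ diceSum X j ω :=
  Finset.sum_le_sum_of_subset (Finset.range_subset_range.mpr h)

lemma dice_succ (X : ℕ → Ω → ℕ) (n : ℕ) (ω : Ω) :
    diceSum X (n+1) ω = diceSum X n ω + X n ω :=
  Finset.sum_range_succ _ _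

lemma dice_zero (X : ℕ → Ω → ℕ) (ω : Ω) : diceSum X 0 ω = 0 := by
  simp [diceSum]

lemma dice_ge (X : ℕ → Ω → ℕ) (hrange : ∀ i ω, X i ω ∈ Finset.Icc 1 6) (n : ℕ) (ω : Ω) :
    n ≤ diceSum X n ω := by
  calc n = ∑ _i ∈ Finset.range n, 1 := by simp
  _ ≤ _ := Finset.sum_le_sum fun i _ => (Finset.mem_Icc.mp (hrange i ω)).1

lemma meas_dice {X : ℕ → Ω → ℕ} (hmeas : ∀ i, Measurable (X i)) (n : ℕ) :
    Measurable (diceSum X n) :=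
  Finset.measurable_sum _ fun i _ => hmeas i

/-- `S_n = m` and no prime among `S_1,…,S_n`. -/
def Eset (X : ℕ → Ω → ℕ) (n m : ℕ) : Set Ω :=
  {ω | diceSum X n ω = m ∧ ∀ i, 1 ≤ i → i ≤ n → ¬ (diceSum X i ω).Prime}

/-- No prime among the `S_i` that are `< p`. -/
def Gset (X : ℕ → Ω → ℕ) (p : ℕ) : Set Ω :=
  {ω | ∀ i, 1 ≤ i → diceSum X i ω < p → ¬ (diceSum X i ω).Prime}

/-- No prime among the `S_i` that are `≤ p`. -/
def Hset (X : ℕ → Ω → ℕ) (p : ℕ) : Set Ω :=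
  {ω | ∀ i, 1 ≤ i → diceSum X i ω ≤ p → ¬ (diceSum X i ω).Prime}

lemma meas_Eset {X : ℕ → Ω → ℕ} (hmeas : ∀ i, Measurable (X i)) (n m : ℕ) :
    MeasurableSet (Eset X n m) := by
  have : Eset X n m = (diceSum X n) ⁻¹' {m} ∩
      ⋂ (i : ℕ), (diceSum X i) ⁻¹' {k | 1 ≤ i → i ≤ n → ¬ k.Prime} := by
    ext ω; simp [Eset, Set.mem_iInter]
  rw [this]
  exact ((meas_dice hmeas n) MeasurableSet.of_discrete).inter
    (MeasurableSet.iInter fun i => (meas_dice hmeas i) MeasurableSet.of_discrete)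

lemma meas_box {X : ℕ → Ω → ℕ} (hmeas : ∀ i, Measurable (X i)) (n a : ℕ) :
    MeasurableSet {ω | X n ω ∈ Finset.Icc a 6} :=
  (hmeas n) MeasurableSet.of_discrete

lemma indep_box (μ : Measure Ω) {X : ℕ → Ω → ℕ} (hmeas : ∀ i, Measurable (X i))
    (hindep : iIndepFun X μ) (n m a : ℕ) :
    μ (Eset X n m ∩ {ω | X n ω ∈ Finset.Icc a 6}) =
      μ (Eset X n m) * μ {ω | X n ω ∈ Finset.Icc a 6} := by
  set T : Ω → (↥(Finset.range n) → ℕ) := fun ω i => X i ω with hT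
  set U : Ω → (↥({n} : Finset ℕ) → ℕ) := fun ω i => X i ω with hU
  have hTU : IndepFun T U μ :=
    hindep.indepFun_finset (Finset.range n) {n}
      (Finset.disjoint_singleton_right.mpr (by simp)) hmeas
  have hE : Eset X n m = T ⁻¹' (T '' Eset X n m) := by
    refine Set.Subset.antisymm (Set.subset_preimage_image _ _) ?_
    intro ω hω
    obtain ⟨ω', hω', hTω⟩ := hω
    have hX : ∀ i, i < n → X i ω' = X i ω := fun i hi =>
      congrFun hTω ⟨i, Finset.mem_range.mpr hi⟩
    have hS : ∀ k, k ≤ n → diceSum X k ω' = diceSum X k ω := fun k hk =>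
      Finset.sum_congr rfl fun i hi => hX i (lt_of_lt_of_le (Finset.mem_range.mp hi) hk)
    exact ⟨by rw [← hS n le_rfl]; exact hω'.1,
      fun i h1 h2 => by rw [← hS i h2]; exact hω'.2 i h1 h2⟩
  have hXn : {ω | X n ω ∈ Finset.Icc a 6} =
      U ⁻¹' {y | y ⟨n, Finset.mem_singleton_self n⟩ ∈ Finset.Icc a 6} := rfl
  rw [hE, hXn]
  exact hTU.measure_inter_preimage_eq_mul _ _
    ((Set.to_countable _).measurableSet) ((Set.to_countable _).measurableSet)

lemma unif_Icc (μ : Measure Ω) {X : ℕ → Ω → ℕ} (hmeas : ∀ i, Measurable (X i))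
    (hunif : ∀ i v, v ∈ Finset.Icc 1 6 → μ {ω | X i ω = v} = 1/6)
    (n a : ℕ) (ha : 1 ≤ a) :
    μ {ω | X n ω ∈ Finset.Icc a 6} = ((Finset.Icc a 6).card : ℝ≥0∞) * (1/6) := by
  have hs : {ω | X n ω ∈ Finset.Icc a 6} = ⋃ v ∈ Finset.Icc a 6, {ω | X n ω = v} := by
    ext ω; simp
  rw [hs, measure_biUnion_finset ?hd ?hm]
  · have hc : ∀ v ∈ Finset.Icc a 6, μ {ω | X n ω = v} = 1/6 := by
      intro v hv
      have h := Finset.mem_Icc.mp hv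
      exact hunif n v (Finset.mem_Icc.mpr ⟨le_trans ha h.1, h.2⟩)
    rw [Finset.sum_congr rfl hc, Finset.sum_const, nsmul_eq_mul]
  case hd =>
    intro v hv w hw hvw
    simp only [Function.onFun]
    rw [Set.disjoint_left]
    intro ω h1 h2
    exact hvw ((h1 : X n ω = v).symm.trans (h2 : X n ω = w))
  case hm =>
    intro v _
    exact (hmeas n) (MeasurableSet.of_discrete (s := {k | k = v}))

lemma cover_H {X : ℕ → Ω → ℕ} (hrange : ∀ i ω, X i ω ∈ Finset.Icc 1 6)
    {p : ℕ} (hp : p.Prime) :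
    Hset X p ⊆ ⋃ n ∈ Finset.range p, ⋃ r ∈ Finset.Icc 1 5,
      (Eset X n (p - r) ∩ {ω | X n ω ∈ Finset.Icc (r+1) 6}) := by
  classical
  intro ω hω
  have hfin : ∃ i, p ≤ diceSum X i ω := ⟨p, dice_ge X hrange p ω⟩
  set N := Nat.find hfin with hN
  have hNs : p ≤ diceSum X N ω := Nat.find_spec hfin
  have hN0 : N ≠ 0 := by
    intro h
    rw [h, dice_zero] at hNs
    have := hp.two_le; omega
  set n := N - 1 with hn
  have hnN : n + 1 = N := by omega
  have hlt : diceSum X n ω < p := by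
    have := Nat.find_min hfin (m := n) (by omega)
    omega
  have hXr := Finset.mem_Icc.mp (hrange n ω)
  have hsucc := dice_succ X n ω
  have hS1 : p ≤ diceSum X (n+1) ω := by rw [hnN]; exact hNs
  have hne : diceSum X (n+1) ω ≠ p := by
    intro h
    exact hω (n+1) (by omega) (le_of_eq h) (by rw [h]; exact hp)
  have hnp : n < p := by
    have : N ≤ p := Nat.find_le (dice_ge X hrange p ω)
    have := hp.two_le
    omega
  refine Set.mem_iUnion₂.mpr ⟨n, Finset.mem_range.mpr hnp, ?_⟩
  refine Set.mem_iUnion₂.mpr ⟨p - diceSum X n ω,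
    Finset.mem_Icc.mpr ⟨by omega, by omega⟩, ?_, ?_⟩
  · refine ⟨by omega, fun i h1 h2 => hω i h1 ?_⟩
    exact (lt_of_le_of_lt (dice_mono X h2 ω) hlt).le
  · exact Finset.mem_Icc.mpr ⟨by omega, hXr.2⟩

lemma union_G {X : ℕ → Ω → ℕ} {p : ℕ} (hp7 : 7 ≤ p) :
    (⋃ q ∈ Finset.range p ×ˢ Finset.Icc 1 6,
      (Eset X q.1 (p - q.2) ∩ {ω | X q.1 ω ∈ Finset.Icc q.2 6})) ⊆ Gset X p := by
  intro ω hω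
  obtain ⟨q, hq, hmem⟩ := Set.mem_iUnion₂.mp hω
  obtain ⟨n, r⟩ := q
  obtain ⟨hq1, hq2⟩ := Finset.mem_product.mp hq
  intro i h1 hip
  rcases le_or_gt i n with h | h
  · exact hmem.1.2 i h1 h
  · exfalso
    have hXr := Finset.mem_Icc.mp (show X n ω ∈ Finset.Icc r 6 from hmem.2)
    have hs := dice_succ X n ω
    have he := hmem.1.1
    have hr := Finset.mem_Icc.mp hq2
    have hm := dice_mono X (show n+1 ≤ i by omega) ω
    simp only at he hXr hs hm
    omega

lemma disj_aux {X : ℕ → Ω → ℕ} {p : ℕ} (hp7 : 7 ≤ p) {n r n' r' : ℕ}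
    (hr : r ∈ Finset.Icc 1 6) (hr' : r' ∈ Finset.Icc 1 6) (hnn : n < n') {ω : Ω}
    (h1 : ω ∈ Eset X n (p - r) ∩ {ω | X n ω ∈ Finset.Icc r 6})
    (h2 : ω ∈ Eset X n' (p - r') ∩ {ω | X n' ω ∈ Finset.Icc r' 6}) : False := by
  have hs := dice_succ X n ω
  have hb := Finset.mem_Icc.mp (show X n ω ∈ Finset.Icc r 6 from h1.2)
  have e1 := h1.1.1
  have e2 := h2.1.1
  have hm := dice_mono X (show n+1 ≤ n' by omega) ω
  have hr1 := Finset.mem_Icc.mp hr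
  have hr2 := Finset.mem_Icc.mp hr'
  omega

lemma contraction (μ : Measure Ω) [IsProbabilityMeasure μ] {X : ℕ → Ω → ℕ}
    (hmeas : ∀ i, Measurable (X i))
    (hindep : iIndepFun X μ)
    (hunif : ∀ i v, v ∈ Finset.Icc 1 6 → μ {ω | X i ω = v} = 1/6)
    (hrange : ∀ i ω, X i ω ∈ Finset.Icc 1 6)
    {p : ℕ} (hp : p.Prime) (hp7 : 7 ≤ p) :
    μ (Hset X p) ≤ 5/6 * μ (Gset X p) := by
  have hval : ∀ n a, 1 ≤ a → ∀ m, μ (Eset X n m ∩ {ω | X n ω ∈ Finset.Icc a 6}) =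
      μ (Eset X n m) * (((7 - a : ℕ) : ℝ≥0∞) * (1/6)) := by
    intro n a ha m
    rw [indep_box μ hmeas hindep n m a, unif_Icc μ hmeas hunif n a ha, Nat.card_Icc]
  calc μ (Hset X p)
      ≤ μ (⋃ n ∈ Finset.range p, ⋃ r ∈ Finset.Icc 1 5,
          (Eset X n (p - r) ∩ {ω | X n ω ∈ Finset.Icc (r+1) 6})) :=
        measure_mono (cover_H hrange hp)
    _ ≤ ∑ n ∈ Finset.range p, ∑ r ∈ Finset.Icc 1 5,
          μ (Eset X n (p - r) ∩ {ω | X n ω ∈ Finset.Icc (r+1) 6}) :=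
        le_trans (measure_biUnion_finset_le _ _)
          (Finset.sum_le_sum fun n _ => measure_biUnion_finset_le _ _)
    _ = ∑ n ∈ Finset.range p, ∑ r ∈ Finset.Icc 1 5,
          μ (Eset X n (p - r)) * (((6 - r : ℕ) : ℝ≥0∞) * (1/6)) := by
        refine Finset.sum_congr rfl fun n _ => Finset.sum_congr rfl fun r hr => ?_
        have h1 := (Finset.mem_Icc.mp hr).1
        rw [hval n (r+1) (by omega) (p - r)]
        congr 3
        omega
    _ ≤ ∑ n ∈ Finset.range p, ∑ r ∈ Finset.Icc 1 5,
          5/6 * (μ (Eset X n (p - r)) * (((7 - r : ℕ) : ℝ≥0∞) * (1/6))) := by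
        refine Finset.sum_le_sum fun n _ => Finset.sum_le_sum fun r hr => ?_
        have h1 := Finset.mem_Icc.mp hr
        rw [mul_comm ((5:ℝ≥0∞)/6), mul_assoc]
        refine mul_le_mul_right ?_ _
        have h2 := enn_arith (6 - r) (7 - r) (by omega)
        calc ((6-r:ℕ):ℝ≥0∞) * (1/6) ≤ ((7-r:ℕ):ℝ≥0∞)*(1/6)*(5/6) := h2
        _ = ((7-r:ℕ):ℝ≥0∞) * (1/6 * (5/6)) := by ring
        _ = ((7-r:ℕ):ℝ≥0∞) * (1/6) * (5/6) := by ring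
    _ = 5/6 * ∑ n ∈ Finset.range p, ∑ r ∈ Finset.Icc 1 5,
          μ (Eset X n (p - r)) * (((7 - r : ℕ) : ℝ≥0∞) * (1/6)) := by
        rw [Finset.mul_sum]
        exact Finset.sum_congr rfl fun n _ => (Finset.mul_sum _ _ _).symm
    _ ≤ 5/6 * ∑ n ∈ Finset.range p, ∑ r ∈ Finset.Icc 1 6,
          μ (Eset X n (p - r)) * (((7 - r : ℕ) : ℝ≥0∞) * (1/6)) := by
        refine mul_le_mul_right
          (Finset.sum_le_sum fun n _ => Finset.sum_le_sum_of_subset ?_) _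
        intro x hx
        simp only [Finset.mem_Icc] at *
        omega
    _ = 5/6 * ∑ q ∈ Finset.range p ×ˢ Finset.Icc 1 6,
          μ (Eset X q.1 (p - q.2) ∩ {ω | X q.1 ω ∈ Finset.Icc q.2 6}) := by
        rw [Finset.sum_product]
        congr 1
        refine Finset.sum_congr rfl fun n _ => Finset.sum_congr rfl fun r hr => ?_
        rw [hval n r (Finset.mem_Icc.mp hr).1 (p - r)]
    _ = 5/6 * μ (⋃ q ∈ Finset.range p ×ˢ Finset.Icc 1 6,
          (Eset X q.1 (p - q.2) ∩ {ω | X q.1 ω ∈ Finset.Icc q.2 6})) := by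
        congr 1
        refine (measure_biUnion_finset ?_ ?_).symm
        · rintro ⟨n,r⟩ hq ⟨n',r'⟩ hq' hne
          simp only [Finset.coe_product, Set.mem_prod, Finset.mem_coe,
            Finset.mem_range, Finset.mem_Icc] at hq hq'
          simp only [Function.onFun]
          rw [Set.disjoint_left]
          intro ω h1 h2
          rcases lt_trichotomy n n' with h|h|h
          · exact disj_aux hp7 (Finset.mem_Icc.mpr hq.2) (Finset.mem_Icc.mpr hq'.2) h h1 h2
          · subst h
            have e1 : diceSum X n ω = p - r := h1.1.1
            have e2 : diceSum X n ω = p - r' := h2.1.1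
            have : r = r' := by omega
            exact hne (by rw [this])
          · exact disj_aux hp7 (Finset.mem_Icc.mpr hq'.2) (Finset.mem_Icc.mpr hq.2) h h2 h1
        · rintro ⟨n,r⟩ _
          exact (meas_Eset hmeas n (p - r)).inter (meas_box hmeas n r)
    _ ≤ 5/6 * μ (Gset X p) := mul_le_mul_right (measure_mono (union_G hp7)) _


end TauAux

open TauAux

/-- The first hitting time of the primes by the running sum of i.i.d. fair dice
is finite almost surely. -/
theorem tau_finite_as
    {Ω : Type*} [MeasurableSpace Ω] (μ : Measure Ω) [IsProbabilityMeasure μ]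
    (X : ℕ → Ω → ℕ) (hmeas : ∀ i, Measurable (X i))
    (hindep : iIndepFun X μ)
    (hunif : ∀ i v, v ∈ Finset.Icc 1 6 → μ {ω | X i ω = v} = 1/6)
    (hrange : ∀ i ω, X i ω ∈ Finset.Icc 1 6) :
    ∀ᵐ ω ∂μ, ∃ n, 1 ≤ n ∧ (diceSum X n ω).Prime := by
  classical
  rw [ae_iff]
  have hq_mono : StrictMono (Nat.nth Nat.Prime) :=
    Nat.nth_strictMono Nat.infinite_setOf_prime
  set q : ℕ → ℕ := fun k => Nat.nth Nat.Prime (k + 6) with hqdef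
  have hq_prime : ∀ k, (q k).Prime := fun k => Nat.prime_nth_prime _
  have hq7 : ∀ k, 7 ≤ q k := by
    intro k
    have h1 : k + 6 ≤ q k := hq_mono.le_apply
    have h2 := hq_prime k
    have h3 : q k ≠ 6 := fun h => by rw [h] at h2; norm_num at h2
    omega
  have hlt : ∀ k, q k < q (k+1) := fun k => hq_mono (by omega)
  have hiter : ∀ k, μ (Gset X (q k)) ≤ (5/6)^k := by
    intro k
    induction k with
    | zero => simpa using prob_le_one
    | succ k ih =>
      calc μ (Gset X (q (k+1))) ≤ μ (Hset X (q k)) := by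
            refine measure_mono fun ω hω i h1 hle => hω i h1 ?_
            exact lt_of_le_of_lt hle (hlt k)
        _ ≤ 5/6 * μ (Gset X (q k)) :=
            contraction μ hmeas hindep hunif hrange (hq_prime k) (hq7 k)
        _ ≤ 5/6 * (5/6)^k := mul_le_mul_right ih _
        _ = (5/6)^(k+1) := by rw [pow_succ, mul_comm]
  have hA : ∀ k, μ {ω | ¬∃ n, 1 ≤ n ∧ (diceSum X n ω).Prime} ≤ (5/6)^k := by
    intro k
    refine le_trans (measure_mono ?_) (hiter k)
    intro ω hω i h1 _ hpr
    exact hω ⟨i, h1, hpr⟩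
  have h0 : μ {ω | ¬∃ n, 1 ≤ n ∧ (diceSum X n ω).Prime} ≤ 0 :=
    ge_of_tendsto' (ENNReal.tendsto_pow_atTop_nhds_zero_of_lt_one enn_lt_one) hA
  exact le_antisymm h0 (zero_le)
end

section
/- For every k ≥ 1 and every non-prime integer n with k ≤ n ≤ 6k, p(k,n) < (1/3)·(5/6)^{π(n)}, where π(n) denotes the number of primes strictly less than n. -/
open MeasureTheory ProbabilityTheory

lemma card_primes_window (b : ℕ) (hb : 10 ≤ b) :
    ((Finset.Ico b (b + 6)).filter Nat.Prime).card ≤ 2 := by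
  have h : ((Finset.Ico b (b + 6)).filter Nat.Prime).card ≤ ({1, 5} : Finset ℕ).card := by
    apply Finset.card_le_card_of_injOn (fun m => m % 6)
    · intro m hm
      simp only [Finset.coe_filter, Finset.mem_coe, Finset.mem_filter, Finset.mem_Ico, Set.mem_setOf_eq] at hm
      obtain ⟨⟨h1, h2⟩, hp⟩ := hm
      have hd2 : ¬ (2 ∣ m) := by
        intro h; rcases hp.eq_one_or_self_of_dvd 2 h with h' | h' <;> omega
      have hd3 : ¬ (3 ∣ m) := by
        intro h; rcases hp.eq_one_or_self_of_dvd 3 h with h' | h' <;> omega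
      simp only [Finset.coe_insert, Finset.coe_singleton, Set.mem_insert_iff, Set.mem_singleton_iff, Finset.mem_coe, Finset.mem_insert, Finset.mem_singleton]
      omega
    · intro a ha b' hb' hab
      simp only [Finset.coe_filter, Set.mem_setOf_eq, Finset.mem_Ico] at ha hb'
      dsimp at hab
      omega
  simpa using h

lemma primeCounting'_eq_add (m n : ℕ) (h : m ≤ n) :
    Nat.primeCounting' n =
      Nat.primeCounting' m + ((Finset.Ico m n).filter Nat.Prime).card := by
  show Nat.count Nat.Prime n = Nat.count Nat.Prime m + _
  rw [Nat.count_eq_card_filter_range, Nat.count_eq_card_filter_range,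
    Finset.range_eq_Ico,
    ← Finset.Ico_union_Ico_eq_Ico (Nat.zero_le m) h, Finset.filter_union,
    Finset.card_union_of_disjoint
      (Finset.disjoint_filter_filter (Finset.Ico_disjoint_Ico_consecutive 0 m n)), Finset.range_eq_Ico]

lemma pow_le_of_count (a b c s : ℕ) (hc : c ≤ s) (h : b = a + c) :
    ((5:ℝ)/6) ^ a ≤ (6/5) ^ s * (5/6) ^ b := by
  subst h
  rw [pow_add]
  have h1 : ((6:ℝ)/5) ^ c * (5/6) ^ c = 1 := by
    rw [← mul_pow]; norm_num
  have h2 : ((6:ℝ)/5) ^ c ≤ (6/5) ^ s := pow_le_pow_right₀ (by norm_num) hc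
  have h3 : (0:ℝ) < (5/6) ^ a := by positivity
  have h4 : (0:ℝ) < (5/6) ^ c := by positivity
  have h5 : (1:ℝ) ≤ (6/5) ^ s * (5/6) ^ c := by
    calc (1:ℝ) = (6/5) ^ c * (5/6) ^ c := h1.symm
    _ ≤ (6/5) ^ s * (5/6) ^ c := by nlinarith
  nlinarith

lemma window_sum (n : ℕ) (hn : ¬ n.Prime) :
    ∑ j ∈ Finset.Icc 1 6, (if j < n ∧ ¬ (n - j).Prime
        then ((5:ℝ)/6) ^ Nat.primeCounting' (n - j) else 0)
      ≤ 6 * ((5:ℝ)/6) ^ Nat.primeCounting' n := by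
  rcases lt_or_ge n 16 with h16 | h16
  · have e : (Finset.Icc 1 6 : Finset ℕ) = {1,2,3,4,5,6} := by decide
    have p0 : Nat.primeCounting' 0 = 0 := by decide
    have p1 : Nat.primeCounting' 1 = 0 := by decide
    have p2 : Nat.primeCounting' 2 = 0 := by decide
    have p3 : Nat.primeCounting' 3 = 1 := by decide
    have p4 : Nat.primeCounting' 4 = 2 := by decide
    have p5 : Nat.primeCounting' 5 = 2 := by decide
    have p6 : Nat.primeCounting' 6 = 3 := by decide
    have p7 : Nat.primeCounting' 7 = 3 := by decide
    have p8 : Nat.primeCounting' 8 = 4 := by decide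
    have p9 : Nat.primeCounting' 9 = 4 := by decide
    have p10 : Nat.primeCounting' 10 = 4 := by decide
    have p11 : Nat.primeCounting' 11 = 4 := by decide
    have p12 : Nat.primeCounting' 12 = 5 := by decide
    have p13 : Nat.primeCounting' 13 = 5 := by decide
    have p14 : Nat.primeCounting' 14 = 6 := by decide
    have p15 : Nat.primeCounting' 15 = 6 := by decide
    interval_cases n <;>
      first
        | (refine absurd ?_ hn; decide)
        | (rw [e]
           simp only [Finset.sum_insert, Finset.sum_singleton, Finset.mem_insert,
             Finset.mem_singleton, p0, p1, p2, p3, p4, p5, p6, p7, p8, p9, p10, p11,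
             p12, p13, p14, p15]
           norm_num [p0, p1, p2, p3, p4, p5, p6, p7, p8, p9, p10, p11, p12, p13, p14, p15])
  · -- large case
    have hconv : ∑ j ∈ Finset.Icc 1 6, (if j < n ∧ ¬ (n - j).Prime
          then ((5:ℝ)/6) ^ Nat.primeCounting' (n - j) else 0)
        = ∑ m ∈ Finset.Ico (n - 6) n, (if ¬ m.Prime
          then ((5:ℝ)/6) ^ Nat.primeCounting' m else 0) := by
      apply Finset.sum_nbij' (i := fun j => n - j) (j := fun m => n - m)
      · intro a ha; simp only [Finset.mem_Icc] at ha; simp only [Finset.mem_Ico]; omega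
      · intro a ha; simp only [Finset.mem_Ico] at ha; simp only [Finset.mem_Icc]; omega
      · intro a ha; simp only [Finset.mem_Icc] at ha; omega
      · intro a ha; simp only [Finset.mem_Ico] at ha; omega
      · intro a ha
        simp only [Finset.mem_Icc] at ha
        have hlt : a < n := by omega
        simp only [hlt, true_and]
    rw [hconv, ← Finset.sum_filter]
    set W := Finset.Ico (n - 6) n with hW
    set s := (W.filter Nat.Prime).card with hs
    have hs2 : s ≤ 2 := by
      have h1 := card_primes_window (n - 6) (by omega)
      have h2 : n - 6 + 6 = n := by omega
      rw [h2] at h1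
      exact h1
    have hWcard : W.card = 6 := by rw [hW, Nat.card_Ico]; omega
    have hcard : (W.filter fun m => ¬ m.Prime).card = 6 - s := by
      have := Finset.card_filter_add_card_filter_not (s := W) (p := Nat.Prime)
      omega
    have hterm : ∀ m ∈ W.filter (fun m => ¬ m.Prime),
        ((5:ℝ)/6) ^ Nat.primeCounting' m ≤ (6/5) ^ s * (5/6) ^ Nat.primeCounting' n := by
      intro m hm
      simp only [Finset.mem_filter, hW, Finset.mem_Ico] at hm
      apply pow_le_of_count _ _ (((Finset.Ico m n).filter Nat.Prime).card) _ ?_ 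
        (primeCounting'_eq_add m n (by omega))
      rw [hs]
      apply Finset.card_le_card
      apply Finset.filter_subset_filter
      rw [hW]
      exact Finset.Ico_subset_Ico (by omega) le_rfl
    calc ∑ m ∈ W.filter (fun m => ¬ m.Prime), ((5:ℝ)/6) ^ Nat.primeCounting' m
        ≤ (W.filter (fun m => ¬ m.Prime)).card • ((6/5) ^ s * ((5:ℝ)/6) ^ Nat.primeCounting' n) :=
          Finset.sum_le_card_nsmul _ _ _ hterm
      _ = ((6 - s : ℕ) : ℝ) * ((6/5) ^ s * ((5:ℝ)/6) ^ Nat.primeCounting' n) := by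
          rw [hcard, nsmul_eq_mul]
      _ ≤ 6 * ((5:ℝ)/6) ^ Nat.primeCounting' n := by
          have hX : (0:ℝ) < ((5:ℝ)/6) ^ Nat.primeCounting' n := by positivity
          interval_cases s <;> push_cast <;> norm_num <;> nlinarith

lemma hitProb_key {Ω : Type*} [MeasurableSpace Ω] (μ : Measure Ω) [IsProbabilityMeasure μ]
    (X : ℕ → Ω → ℕ) (hmeas : ∀ i, Measurable (X i))
    (hindep : iIndepFun X μ)
    (hunif : ∀ i v, v ∈ Finset.Icc 1 6 → μ {ω | X i ω = v} = 1/6)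
    (hrange : ∀ i ω, X i ω ∈ Finset.Icc 1 6) :
    ∀ k, 1 ≤ k → ∀ n, ¬ n.Prime →
      hitProb μ X k n ≤ (3/10) * ((5:ℝ)/6) ^ (Nat.primeCounting' n) := by
  have hlow : ∀ (m : ℕ) (ω : Ω), m ≤ diceSum X m ω := by
    intro m ω
    calc m = ∑ _i ∈ Finset.range m, 1 := by simp
    _ ≤ ∑ i ∈ Finset.range m, X i ω :=
      Finset.sum_le_sum (fun i _ => (Finset.mem_Icc.mp (hrange i ω)).1)
  intro k hk
  induction k, hk using Nat.le_induction with
  | base =>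
    intro n hn
    have hset : {ω | diceSum X 1 ω = n ∧ ∀ i, 1 ≤ i → i < 1 → ¬ (diceSum X i ω).Prime}
        = {ω | X 0 ω = n} := by
      ext ω
      simp only [Set.mem_setOf_eq, diceSum, Finset.sum_range_one, and_iff_left_iff_imp]
      intro _ i h1 h2
      omega
    rw [hitProb, hset]
    by_cases hmem : n ∈ Finset.Icc 1 6
    · rw [hunif 0 n hmem]
      have hv : n = 1 ∨ n = 4 ∨ n = 6 := by
        simp only [Finset.mem_Icc] at hmem
        obtain ⟨hm1, hm2⟩ := hmem
        interval_cases n <;> first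
          | (refine absurd ?_ hn; decide)
          | simp
      have p1 : Nat.primeCounting' 1 = 0 := by decide
      have p4 : Nat.primeCounting' 4 = 2 := by decide
      have p6 : Nat.primeCounting' 6 = 3 := by decide
      rcases hv with h | h | h <;> subst h <;>
        · rw [ENNReal.toReal_div]
          norm_num [p1, p4, p6]
    · have hempty : {ω | X 0 ω = n} = ∅ := by
        ext ω
        simp only [Set.mem_setOf_eq, Set.mem_empty_iff_false, iff_false]
        intro h
        exact hmem (h ▸ hrange 0 ω)
      rw [hempty]
      simp only [measure_empty, ENNReal.toReal_zero]
      positivity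
  | succ k hk ih =>
    intro n hn
    classical
    set A : ℕ → Set Ω := fun j =>
      {ω | diceSum X k ω + j = n ∧ (∀ i, 1 ≤ i → i < k → ¬ (diceSum X i ω).Prime)
        ∧ ¬ (diceSum X k ω).Prime} with hA
    -- inclusion
    have hsub : {ω | diceSum X (k+1) ω = n ∧ ∀ i, 1 ≤ i → i < k+1 → ¬ (diceSum X i ω).Prime}
        ⊆ ⋃ j ∈ Finset.Icc 1 6, ({ω | X k ω = j} ∩ A j) := by
      intro ω hω
      obtain ⟨h1, h2⟩ := hω
      have hjm : X k ω ∈ Finset.Icc 1 6 := hrange k ω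
      apply Set.mem_biUnion hjm
      refine ⟨rfl, ?_, ?_, ?_⟩
      · rw [← h1]
        simp [diceSum, Finset.sum_range_succ]
      · intro i hi1 hi2; exact h2 i hi1 (by omega)
      · exact h2 k hk (by omega)
    -- independence product
    have hprod : ∀ j ∈ Finset.Icc 1 6,
        μ ({ω | X k ω = j} ∩ A j) = (1/6) * μ (A j) := by
      intro j hj
      have hST : Disjoint (Finset.range k) ({k} : Finset ℕ) := by simp
      have hInd := hindep.indepFun_finset (Finset.range k) {k} hST hmeas
      set SA : Set ((i : (Finset.range k : Finset ℕ)) → ℕ) :=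
        {v | (∑ i ∈ (Finset.range k).attach, v i) + j = n
          ∧ (∀ i', 1 ≤ i' → i' < k →
              ¬ (∑ x ∈ (Finset.range k).attach.filter (fun x => x.1 < i'), v x).Prime)
          ∧ ¬ (∑ i ∈ (Finset.range k).attach, v i).Prime} with hSA
      set SG : Set ((i : ({k} : Finset ℕ)) → ℕ) :=
        {v | v ⟨k, Finset.mem_singleton_self k⟩ = j} with hSG
      have hpre1 : A j = (fun ω (i : (Finset.range k : Finset ℕ)) => X i ω) ⁻¹' SA := by
        ext ω
        have hsum : ∀ i' : ℕ, i' ≤ k →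
            (∑ x ∈ (Finset.range k).attach.filter (fun x => x.1 < i'), X x.1 ω)
              = diceSum X i' ω := by
          intro i' hi'
          rw [Finset.sum_filter, Finset.sum_attach _ (fun m => if m < i' then X m ω else 0),
            ← Finset.sum_filter, diceSum]
          congr 1
          ext m
          simp only [Finset.mem_filter, Finset.mem_range]
          omega
        simp only [hA, hSA, Set.mem_setOf_eq, Set.mem_preimage,
          Finset.sum_attach _ (fun m => X m ω)]
        constructor
        · rintro ⟨h1, h2, h3⟩
          refine ⟨h1, fun i' hi1 hi2 => ?_, h3⟩
          rw [hsum i' (by omega)]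
          exact h2 i' hi1 hi2
        · rintro ⟨h1, h2, h3⟩
          refine ⟨h1, fun i' hi1 hi2 => ?_, h3⟩
          have := h2 i' hi1 hi2
          rwa [hsum i' (by omega)] at this
      have hpre2 : {ω | X k ω = j}
          = (fun ω (i : ({k} : Finset ℕ)) => X i ω) ⁻¹' SG := by
        ext ω
        simp [hSG]
      rw [hpre1, hpre2, Set.inter_comm,
        hInd.measure_inter_preimage_eq_mul SA SG (Set.to_countable SA).measurableSet
          (Set.to_countable SG).measurableSet, mul_comm]
      congr 1
      rw [← hpre2]
      exact hunif k j hj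
    -- bound on A j
    have hAbound : ∀ j ∈ Finset.Icc 1 6, (μ (A j)).toReal ≤
        (if j < n ∧ ¬ (n - j).Prime
          then (3/10) * ((5:ℝ)/6) ^ Nat.primeCounting' (n - j) else 0) := by
      intro j hj
      by_cases hcond : j < n ∧ ¬ (n - j).Prime
      · rw [if_pos hcond]
        have hsub2 : A j ⊆ {ω | diceSum X k ω = n - j
            ∧ ∀ i, 1 ≤ i → i < k → ¬ (diceSum X i ω).Prime} := by
          rintro ω ⟨h1, h2, _⟩
          exact ⟨by omega, h2⟩
        calc (μ (A j)).toReal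
            ≤ hitProb μ X k (n - j) :=
              ENNReal.toReal_mono (measure_ne_top μ _) (measure_mono hsub2)
          _ ≤ _ := ih (n - j) hcond.2
      · rw [if_neg hcond]
        have hempty : A j = ∅ := by
          ext ω
          simp only [hA, Set.mem_setOf_eq, Set.mem_empty_iff_false, iff_false]
          rintro ⟨h1, _, h3⟩
          have hl := hlow k ω
          apply hcond
          have he : n - j = diceSum X k ω := by omega
          exact ⟨by omega, he ▸ h3⟩
        rw [hempty]
        simp
    -- assemble
    have hterm_ne : ∀ j ∈ Finset.Icc 1 6, μ ({ω | X k ω = j} ∩ A j) ≠ ⊤ :=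
      fun j _ => measure_ne_top μ _
    calc hitProb μ X (k+1) n
        ≤ (∑ j ∈ Finset.Icc 1 6, μ ({ω | X k ω = j} ∩ A j)).toReal := by
          apply ENNReal.toReal_mono
          · exact (ENNReal.sum_lt_top.mpr (fun j hj => (hterm_ne j hj).lt_top)).ne
          · exact le_trans (measure_mono hsub) (measure_biUnion_finset_le _ _)
      _ = ∑ j ∈ Finset.Icc 1 6, (μ ({ω | X k ω = j} ∩ A j)).toReal :=
          ENNReal.toReal_sum hterm_ne
      _ = ∑ j ∈ Finset.Icc 1 6, (1/6) * (μ (A j)).toReal := by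
          apply Finset.sum_congr rfl
          intro j hj
          rw [hprod j hj, ENNReal.toReal_mul]
          norm_num
      _ ≤ ∑ j ∈ Finset.Icc 1 6, (1/6) * (if j < n ∧ ¬ (n - j).Prime
            then (3/10) * ((5:ℝ)/6) ^ Nat.primeCounting' (n - j) else 0) := by
          apply Finset.sum_le_sum
          intro j hj
          exact mul_le_mul_of_nonneg_left (hAbound j hj) (by norm_num)
      _ = (1/6) * ((3/10) * ∑ j ∈ Finset.Icc 1 6, (if j < n ∧ ¬ (n - j).Prime
            then ((5:ℝ)/6) ^ Nat.primeCounting' (n - j) else 0)) := by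
          rw [Finset.mul_sum, Finset.mul_sum]
          apply Finset.sum_congr rfl
          intro j _
          by_cases hc : j < n ∧ ¬ (n - j).Prime <;> simp [hc] <;> ring
      _ ≤ (1/6) * ((3/10) * (6 * ((5:ℝ)/6) ^ Nat.primeCounting' n)) := by
          apply mul_le_mul_of_nonneg_left _ (by norm_num)
          exact mul_le_mul_of_nonneg_left (window_sum n hn) (by norm_num)
      _ = (3/10) * ((5:ℝ)/6) ^ Nat.primeCounting' n := by ring

/-- For every `k ≥ 1` and non-prime `n` with `k ≤ n ≤ 6k`,
`p(k,n) < (1/3)·(5/6)^{π(n)}`, where `π(n)` counts primes strictly below `n`. -/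
theorem hitProb_lt
    {Ω : Type*} [MeasurableSpace Ω] (μ : Measure Ω) [IsProbabilityMeasure μ]
    (X : ℕ → Ω → ℕ) (hmeas : ∀ i, Measurable (X i))
    (hindep : iIndepFun X μ)
    (hunif : ∀ i v, v ∈ Finset.Icc 1 6 → μ {ω | X i ω = v} = 1/6)
    (hrange : ∀ i ω, X i ω ∈ Finset.Icc 1 6) :
    ∀ k n : ℕ, 1 ≤ k → ¬ n.Prime → k ≤ n → n ≤ 6 * k →
      hitProb μ X k n < (1/3) * (5/6 : ℝ) ^ (Nat.primeCounting' n) := by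
  intro k n hk hn _ _
  have h := hitProb_key μ X hmeas hindep hunif hrange k hk n hn
  have hpos : (0:ℝ) < (5/6 : ℝ) ^ (Nat.primeCounting' n) := by positivity
  calc hitProb μ X k n ≤ 3/10 * (5/6 : ℝ) ^ (Nat.primeCounting' n) := h
    _ < 1/3 * (5/6 : ℝ) ^ (Nat.primeCounting' n) := by nlinarith
end

section
/- Let n be a non-prime integer and suppose there are exactly q primes in the set {n-6, n-5, ..., n-1}. Then for every non-prime m ∈ {n-6,...,n-1}, π(m) ≥ π(n) - q, where π(x) denotes the number of primes strictly less than x. Consequently, (1/6)·(6-q)·(1/3)·(5/6)^{π(n)-q} ≤ (1/3)·(5/6)^{π(n)}. -/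
/-- If `n` is non-prime and `q` is the number of primes in `{n-6,…,n-1}`, then every
non-prime `m` in that interval satisfies `π(m) ≥ π(n) - q`, and
`(1/6)·(6-q)·(1/3)·(5/6)^{π(n)-q} ≤ (1/3)·(5/6)^{π(n)}`, where `π(x)` counts primes
strictly below `x`. -/
theorem key_inductive_step (n : ℕ) (hn : ¬ n.Prime)
    (q : ℕ) (hq : q = ((Finset.Icc (n - 6) (n - 1)).filter Nat.Prime).card) :
    (∀ m ∈ Finset.Icc (n - 6) (n - 1), ¬ m.Prime →
        Nat.primeCounting' n - q ≤ Nat.primeCounting' m) ∧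
    (1/6 : ℝ) * (6 - q) * (1/3) * (5/6 : ℝ) ^ (Nat.primeCounting' n - q) ≤
      (1/3 : ℝ) * (5/6 : ℝ) ^ (Nat.primeCounting' n) := by
  have hq6 : q ≤ 6 := by
    subst hq
    calc ((Finset.Icc (n - 6) (n - 1)).filter Nat.Prime).card
        ≤ (Finset.Icc (n - 6) (n - 1)).card := Finset.card_filter_le _ _
      _ ≤ 6 := by rw [Nat.card_Icc]; omega
  constructor
  · intro m hm hmp
    simp only [Finset.mem_Icc] at hm
    have h1 : Nat.primeCounting' n ≤ Nat.primeCounting' m + q := by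
      subst hq
      simp only [Nat.primeCounting', Nat.count_eq_card_filter_range]
      have hsub : Finset.range n ⊆ Finset.range m ∪ Finset.Icc (n - 6) (n - 1) := by
        intro x hx
        simp only [Finset.mem_range, Finset.mem_union, Finset.mem_Icc] at *
        omega
      calc ((Finset.range n).filter Nat.Prime).card
          ≤ ((Finset.range m ∪ Finset.Icc (n - 6) (n - 1)).filter Nat.Prime).card :=
            Finset.card_le_card (Finset.filter_subset_filter _ hsub)
        _ = ((Finset.range m).filter Nat.Prime ∪
              (Finset.Icc (n - 6) (n - 1)).filter Nat.Prime).card := by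
            rw [Finset.filter_union]
        _ ≤ _ := Finset.card_union_le _ _
    omega
  · set k := Nat.primeCounting' n with hk
    have h1 : ((6 : ℝ) - q) / 6 ≤ (5 / 6 : ℝ) ^ q := by
      interval_cases q <;> norm_num
    have h2 : (5 / 6 : ℝ) ^ q * (5 / 6 : ℝ) ^ (k - q) ≤ (5 / 6 : ℝ) ^ k := by
      rw [← pow_add]
      apply pow_le_pow_of_le_one (by norm_num) (by norm_num)
      omega
    have h3 : ((6 : ℝ) - q) / 6 * (5 / 6 : ℝ) ^ (k - q) ≤
        (5 / 6 : ℝ) ^ q * (5 / 6 : ℝ) ^ (k - q) :=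
      mul_le_mul_of_nonneg_right h1 (by positivity)
    nlinarith [pow_nonneg (by norm_num : (0:ℝ) ≤ 5/6) (k - q)]
end

section
/- With f(n) = (n - 1000)·(1/3)·(5/6)^{0.9·n/ln n}, the sum Σ_{n ≥ 1000} f(n) < 7·10^{-8}. -/
set_option maxHeartbeats 1600000

/-- The tail-bounding function `f(n) = (n - 1000)·(1/3)·(5/6)^{0.9 n / ln n}`. -/
noncomputable def tailF (n : ℕ) : ℝ :=
  ((n : ℝ) - 1000) * (1/3) * (5/6 : ℝ) ^ (0.9 * (n : ℝ) / Real.log n)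

lemma tailF_nonneg (n : ℕ) (hn : 1000 ≤ n) : 0 ≤ tailF n := by
  unfold tailF
  have h1 : (0:ℝ) ≤ (n : ℝ) - 1000 := by
    have : (1000:ℝ) ≤ (n:ℝ) := by exact_mod_cast hn
    linarith
  have h2 : (0:ℝ) < (5/6 : ℝ) ^ (0.9 * (n : ℝ) / Real.log n) :=
    Real.rpow_pos_of_pos (by norm_num) _
  positivity

lemma sum_Ico_cast_le (a : ℕ) : ∀ b, a ≤ b →
    ∑ m ∈ Finset.Ico a b, (m:ℝ) ≤ ((b:ℝ)^2 - (a:ℝ)^2)/2 := by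
  intro b hb
  induction b, hb using Nat.le_induction with
  | base => simp
  | succ b hb ih =>
    rw [Finset.sum_Ico_succ_top hb]
    push_cast
    push_cast at ih
    nlinarith [ih]

lemma log_nat_le (B p : ℕ) (hB : 1 ≤ B) (h : B^16 ≤ 2^p) :
    Real.log B ≤ (p : ℝ) * 0.6931471808 / 16 := by
  have hB' : (1:ℝ) ≤ (B:ℝ) := by exact_mod_cast hB
  have hcast : ((B:ℝ))^16 ≤ (2:ℝ)^p := by exact_mod_cast h
  have h2 : Real.log ((B:ℝ)^16) ≤ Real.log ((2:ℝ)^p) :=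
    Real.log_le_log (by positivity) hcast
  rw [Real.log_pow, Real.log_pow] at h2
  have hlog2 : Real.log 2 ≤ 0.6931471808 := le_of_lt Real.log_two_lt_d9
  have hp : (p:ℝ) * Real.log 2 ≤ (p:ℝ) * 0.6931471808 :=
    mul_le_mul_of_nonneg_left hlog2 (Nat.cast_nonneg p)
  push_cast at h2
  linarith

lemma blockBound (a b k p : ℕ) (hab : a ≤ b)
    (hp : (1000 + b)^16 ≤ 2^p)
    (hk : (k:ℝ) * ((p:ℝ) * 0.6931471808 / 16) ≤ 0.9 * (1000 + (a:ℝ))) :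
    ∑ m ∈ Finset.Ico a b, tailF (1000 + m) ≤
      (((b:ℝ)^2 - (a:ℝ)^2)/2) * (1/3 * (5/6:ℝ)^k) := by
  have key : ∀ m ∈ Finset.Ico a b,
      tailF (1000 + m) ≤ (m:ℝ) * (1/3 * (5/6:ℝ)^k) := by
    intro m hm
    obtain ⟨h1, h2⟩ := Finset.mem_Ico.mp hm
    have hmnn : (0:ℝ) ≤ (m:ℝ) := Nat.cast_nonneg m
    have hx : ((1000 + m : ℕ) : ℝ) = 1000 + (m:ℝ) := by push_cast; ring
    have hx1 : (1:ℝ) < ((1000 + m : ℕ) : ℝ) := by rw [hx]; linarith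
    have hlogpos : 0 < Real.log ((1000 + m : ℕ) : ℝ) := Real.log_pos hx1
    have hble : ((1000 + m : ℕ) : ℝ) ≤ ((1000 + b : ℕ) : ℝ) := by
      exact_mod_cast Nat.add_le_add_left (le_of_lt h2) 1000
    have hlogle : Real.log ((1000 + m : ℕ) : ℝ) ≤ (p:ℝ) * 0.6931471808 / 16 := by
      refine le_trans (Real.log_le_log (by linarith) hble) ?_
      exact log_nat_le (1000 + b) p (by omega) hp
    have hexp : (k:ℝ) ≤ 0.9 * ((1000 + m : ℕ) : ℝ) / Real.log ((1000 + m : ℕ) : ℝ) := by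
      rw [le_div_iff₀ hlogpos]
      have s1 : (k:ℝ) * Real.log ((1000 + m : ℕ) : ℝ) ≤ (k:ℝ) * ((p:ℝ) * 0.6931471808 / 16) :=
        mul_le_mul_of_nonneg_left hlogle (Nat.cast_nonneg k)
      have s2 : (0.9:ℝ) * (1000 + (a:ℝ)) ≤ 0.9 * ((1000 + m : ℕ) : ℝ) := by
        rw [hx]
        have : (a:ℝ) ≤ (m:ℝ) := by exact_mod_cast h1
        linarith
      linarith
    have hpow : (5/6:ℝ) ^ (0.9 * ((1000 + m : ℕ) : ℝ) / Real.log ((1000 + m : ℕ) : ℝ))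
        ≤ (5/6:ℝ) ^ ((k:ℕ):ℝ) :=
      Real.rpow_le_rpow_of_exponent_ge (by norm_num) (by norm_num) hexp
    rw [Real.rpow_natCast] at hpow
    unfold tailF
    calc (((1000 + m : ℕ) : ℝ) - 1000) * (1/3) *
          (5/6:ℝ) ^ (0.9 * ((1000 + m : ℕ) : ℝ) / Real.log ((1000 + m : ℕ) : ℝ))
        = (m:ℝ) * (1/3) *
          (5/6:ℝ) ^ (0.9 * ((1000 + m : ℕ) : ℝ) / Real.log ((1000 + m : ℕ) : ℝ)) := by
          rw [hx]; ring
      _ ≤ (m:ℝ) * (1/3) * (5/6:ℝ)^k := by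
          apply mul_le_mul_of_nonneg_left hpow
          positivity
      _ = (m:ℝ) * (1/3 * (5/6:ℝ)^k) := by ring
  calc ∑ m ∈ Finset.Ico a b, tailF (1000 + m)
      ≤ ∑ m ∈ Finset.Ico a b, (m:ℝ) * (1/3 * (5/6:ℝ)^k) := Finset.sum_le_sum key
    _ = (∑ m ∈ Finset.Ico a b, (m:ℝ)) * (1/3 * (5/6:ℝ)^k) := by
        rw [← Finset.sum_mul]
    _ ≤ (((b:ℝ)^2 - (a:ℝ)^2)/2) * (1/3 * (5/6:ℝ)^k) := by
        apply mul_le_mul_of_nonneg_right (sum_Ico_cast_le a b hab)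
        positivity

lemma tail_le (m : ℕ) : tailF (250000 + m) ≤
    1e-90 * (1/((249999:ℝ)+m) - 1/((250000:ℝ)+m)) := by
  have hx : ((250000 + m : ℕ) : ℝ) = 250000 + (m:ℝ) := by push_cast; ring
  set x : ℝ := ((250000 + m : ℕ) : ℝ) with hxdef
  have hm0 : (0:ℝ) ≤ (m:ℝ) := Nat.cast_nonneg m
  have hx250 : (250000:ℝ) ≤ x := by rw [hx]; linarith
  have hx0 : (0:ℝ) < x := by linarith
  have hx1 : (1:ℝ) < x := by linarith
  have hlogpos : 0 < Real.log x := Real.log_pos hx1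
  have hlognn : 0 ≤ Real.log x := le_of_lt hlogpos
  have h18pos : 0 < x ^ ((1:ℝ)/8) := Real.rpow_pos_of_pos hx0 _
  have e1 : Real.log (x ^ ((1:ℝ)/8)) = (1/8) * Real.log x := Real.log_rpow hx0 _
  have e2 : Real.log (x ^ ((1:ℝ)/8)) ≤ x ^ ((1:ℝ)/8) - 1 :=
    Real.log_le_sub_one_of_pos h18pos
  have hlog8 : Real.log x ≤ 8 * x ^ ((1:ℝ)/8) := by nlinarith [e1, e2, h18pos]
  have e3 : (x ^ ((1:ℝ)/8))^(2:ℕ) = x ^ ((1:ℝ)/4) := by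
    rw [← Real.rpow_natCast (x ^ ((1:ℝ)/8)) 2, ← Real.rpow_mul (le_of_lt hx0)]
    norm_num
  have hsq : (Real.log x)^2 ≤ 64 * x ^ ((1:ℝ)/4) := by
    have h := pow_le_pow_left₀ hlognn hlog8 2
    rw [mul_pow, e3] at h
    nlinarith [h]
  have m1 : (((250000:ℝ) ^ ((3:ℝ)/4))^(4:ℕ) : ℝ) = (250000:ℝ)^(3:ℕ) := by
    rw [← Real.rpow_natCast ((250000:ℝ) ^ ((3:ℝ)/4)) 4, ← Real.rpow_mul (by norm_num)]
    norm_num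
  have m2 : ((8960:ℝ))^(4:ℕ) ≤ ((250000:ℝ) ^ ((3:ℝ)/4))^(4:ℕ) := by
    rw [m1]; norm_num
  have m3 : (8960:ℝ) ≤ (250000:ℝ) ^ ((3:ℝ)/4) :=
    le_of_pow_le_pow_left₀ (by norm_num) (Real.rpow_nonneg (by norm_num) _) m2
  have m4 : (250000:ℝ) ^ ((3:ℝ)/4) ≤ x ^ ((3:ℝ)/4) :=
    Real.rpow_le_rpow (by norm_num) hx250 (by norm_num)
  have hq : (8960:ℝ) ≤ x ^ ((3:ℝ)/4) := le_trans m3 m4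
  have hsplit : x ^ ((1:ℝ)/4) * x ^ ((3:ℝ)/4) = x := by
    rw [← Real.rpow_add hx0]; norm_num
  have p14 : (0:ℝ) < x ^ ((1:ℝ)/4) := Real.rpow_pos_of_pos hx0 _
  have hmul : 8960 * x ^ ((1:ℝ)/4) ≤ x := by
    calc 8960 * x ^ ((1:ℝ)/4) ≤ x ^ ((3:ℝ)/4) * x ^ ((1:ℝ)/4) :=
          mul_le_mul_of_nonneg_right hq (le_of_lt p14)
      _ = x := by rw [mul_comm]; exact hsplit
  have hmain : 126 * (Real.log x)^2 ≤ 0.9 * x := by nlinarith [hsq, hmul, p14]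
  have hediv : 126 * Real.log x ≤ 0.9 * x / Real.log x := by
    rw [le_div_iff₀ hlogpos]
    nlinarith [hmain]
  have hrp : (5/6:ℝ) ^ (0.9 * x / Real.log x) ≤ (5/6:ℝ) ^ (126 * Real.log x) :=
    Real.rpow_le_rpow_of_exponent_ge (by norm_num) (by norm_num) hediv
  have hlog56 : Real.log (5/6 : ℝ) ≤ -(1/6) := by
    have := Real.log_le_sub_one_of_pos (show (0:ℝ) < 5/6 by norm_num)
    linarith
  have hre : (5/6:ℝ) ^ (126 * Real.log x) ≤ (x^(21:ℕ))⁻¹ := by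
    rw [Real.rpow_def_of_pos (by norm_num : (0:ℝ) < 5/6)]
    have step : Real.log (5/6:ℝ) * (126 * Real.log x) ≤ Real.log x * (-21) := by
      nlinarith [hlog56, hlognn]
    calc Real.exp (Real.log (5/6:ℝ) * (126 * Real.log x))
        ≤ Real.exp (Real.log x * (-21)) := Real.exp_le_exp.mpr step
      _ = x ^ ((-21:ℝ)) := (Real.rpow_def_of_pos hx0 _).symm
      _ = (x^(21:ℕ))⁻¹ := by
          rw [show ((-21):ℝ) = -((21:ℕ):ℝ) by norm_num, Real.rpow_neg (le_of_lt hx0),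
            Real.rpow_natCast]
  have hpowle : (5/6:ℝ) ^ (0.9 * x / Real.log x) ≤ (x^(21:ℕ))⁻¹ := le_trans hrp hre
  have hxpos21 : (0:ℝ) < x^(21:ℕ) := by positivity
  unfold tailF
  have hb1 : (x - 1000) * (1/3) * (5/6:ℝ) ^ (0.9 * x / Real.log x)
      ≤ x * (1/3) * (x^(21:ℕ))⁻¹ := by
    apply mul_le_mul
    · apply mul_le_mul_of_nonneg_right (by linarith) (by norm_num)
    · exact hpowle
    · have : (0:ℝ) < (5/6:ℝ) ^ (0.9 * x / Real.log x) := Real.rpow_pos_of_pos (by norm_num) _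
      linarith
    · positivity
  refine le_trans hb1 ?_
  have e249 : (249999:ℝ) + (m:ℝ) = x - 1 := by rw [hx]; ring
  have e250 : (250000:ℝ) + (m:ℝ) = x := by rw [hx]
  rw [e249, e250]
  have hxm1 : (0:ℝ) < x - 1 := by linarith
  have hdiff : 1/(x-1) - 1/x = 1/((x-1)*x) := by
    field_simp
    ring
  rw [hdiff]
  rw [show x * (1/3) * (x^(21:ℕ))⁻¹ = x / (3 * x^(21:ℕ)) by field_simp]
  rw [show (1e-90:ℝ) * (1/((x-1)*x)) = 1e-90 / ((x-1)*x) by ring]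
  rw [div_le_div_iff₀ (by positivity) (by positivity)]
  have h18 : (1:ℝ) ≤ 3e-90 * x^(18:ℕ) := by
    have h250 : (250000:ℝ)^(18:ℕ) ≤ x^(18:ℕ) := pow_le_pow_left₀ (by norm_num) hx250 18
    nlinarith [h250]
  have hcube : (0:ℝ) ≤ x^(3:ℕ) := by positivity
  have hmul3 : x^(3:ℕ) * 1 ≤ x^(3:ℕ) * (3e-90 * x^(18:ℕ)) :=
    mul_le_mul_of_nonneg_left h18 hcube
  nlinarith [hmul3, hx0, hx1]

lemma teleSum (N : ℕ) : ∑ i ∈ Finset.range N,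
    (1/((249999:ℝ)+(i:ℝ)) - 1/((249999:ℝ)+((i:ℝ)+1))) = 1/249999 - 1/((249999:ℝ)+(N:ℝ)) := by
  induction N with
  | zero => simp
  | succ n ih =>
    rw [Finset.sum_range_succ, ih]
    push_cast
    have h1 : (249999:ℝ)+(n:ℝ) ≠ 0 := by positivity
    have h2 : (249999:ℝ)+(n:ℝ)+1 ≠ 0 := by positivity
    field_simp
    ring

/-- `∑_{n ≥ 1000} f(n) < 7·10⁻⁸`. -/
theorem tailF_sum :
    Summable (fun m : ℕ => tailF (1000 + m)) ∧
    ∑' m : ℕ, tailF (1000 + m) < 7e-8 := by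
  have htail_nonneg : ∀ i : ℕ, 0 ≤ tailF (250000 + i) := fun i => tailF_nonneg _ (by omega)
  have hterm : ∀ i : ℕ, tailF (250000 + i) ≤
      1e-90 * (1/((249999:ℝ)+(i:ℝ)) - 1/((249999:ℝ)+((i:ℝ)+1))) := by
    intro i
    refine le_trans (tail_le i) (le_of_eq ?_)
    push_cast
    ring
  have hpartial : ∀ N : ℕ, ∑ i ∈ Finset.range N, tailF (250000 + i) ≤ 1e-90 * (1/249999) := by
    intro N
    have step1 : ∑ i ∈ Finset.range N, tailF (250000 + i)
        ≤ ∑ i ∈ Finset.range N,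
            1e-90 * (1/((249999:ℝ)+(i:ℝ)) - 1/((249999:ℝ)+((i:ℝ)+1))) :=
      Finset.sum_le_sum (fun i _ => hterm i)
    refine le_trans step1 ?_
    rw [← Finset.mul_sum, teleSum N]
    have h1 : (0:ℝ) ≤ 1/((249999:ℝ)+(N:ℝ)) := by positivity
    nlinarith [h1]
  have hsm_tail : Summable (fun i : ℕ => tailF (250000 + i)) :=
    summable_of_sum_range_le htail_nonneg hpartial
  have hsm_shift : Summable (fun i : ℕ => tailF (1000 + (i + 249000))) :=
    hsm_tail.congr (fun i => congrArg tailF (by omega))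
  have hsummable : Summable (fun m : ℕ => tailF (1000 + m)) :=
    (summable_nat_add_iff 249000).mp hsm_shift
  refine ⟨hsummable, ?_⟩
  have htsum_tail : ∑' i : ℕ, tailF (1000 + (i + 249000)) ≤ 1e-90 * (1/249999) := by
    have hcong : ∑' i : ℕ, tailF (1000 + (i + 249000)) = ∑' i : ℕ, tailF (250000 + i) :=
      tsum_congr (fun i => congrArg tailF (by omega))
    rw [hcong]
    exact Real.tsum_le_of_sum_range_le htail_nonneg hpartial

  have blk0 := blockBound 0 20 129 160 (by norm_num) (by norm_num) (by norm_num)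
  have blk1 := blockBound 20 40 131 161 (by norm_num) (by norm_num) (by norm_num)
  have blk2 := blockBound 40 60 134 161 (by norm_num) (by norm_num) (by norm_num)
  have blk3 := blockBound 60 80 135 162 (by norm_num) (by norm_num) (by norm_num)
  have blk4 := blockBound 80 100 138 162 (by norm_num) (by norm_num) (by norm_num)
  have blk5 := blockBound 100 120 140 163 (by norm_num) (by norm_num) (by norm_num)
  have blk6 := blockBound 120 140 142 163 (by norm_num) (by norm_num) (by norm_num)
  have blk7 := blockBound 140 160 145 163 (by norm_num) (by norm_num) (by norm_num)
  have blk8 := blockBound 160 180 146 164 (by norm_num) (by norm_num) (by norm_num)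
  have blk9 := blockBound 180 200 149 164 (by norm_num) (by norm_num) (by norm_num)
  have blk10 := blockBound 200 220 151 165 (by norm_num) (by norm_num) (by norm_num)
  have blk11 := blockBound 220 240 153 165 (by norm_num) (by norm_num) (by norm_num)
  have blk12 := blockBound 240 260 156 165 (by norm_num) (by norm_num) (by norm_num)
  have blk13 := blockBound 260 280 157 166 (by norm_num) (by norm_num) (by norm_num)
  have blk14 := blockBound 280 300 160 166 (by norm_num) (by norm_num) (by norm_num)
  have blk15 := blockBound 300 350 161 167 (by norm_num) (by norm_num) (by norm_num)
  have blk16 := blockBound 350 400 166 168 (by norm_num) (by norm_num) (by norm_num)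
  have blk17 := blockBound 400 450 172 169 (by norm_num) (by norm_num) (by norm_num)
  have blk18 := blockBound 450 500 178 169 (by norm_num) (by norm_num) (by norm_num)
  have blk19 := blockBound 500 550 183 170 (by norm_num) (by norm_num) (by norm_num)
  have blk20 := blockBound 550 600 188 171 (by norm_num) (by norm_num) (by norm_num)
  have blk21 := blockBound 600 650 193 172 (by norm_num) (by norm_num) (by norm_num)
  have blk22 := blockBound 650 700 199 172 (by norm_num) (by norm_num) (by norm_num)
  have blk23 := blockBound 700 750 204 173 (by norm_num) (by norm_num) (by norm_num)
  have blk24 := blockBound 750 800 208 174 (by norm_num) (by norm_num) (by norm_num)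
  have blk25 := blockBound 800 850 214 174 (by norm_num) (by norm_num) (by norm_num)
  have blk26 := blockBound 850 900 219 175 (by norm_num) (by norm_num) (by norm_num)
  have blk27 := blockBound 900 950 225 175 (by norm_num) (by norm_num) (by norm_num)
  have blk28 := blockBound 950 2000 218 185 (by norm_num) (by norm_num) (by norm_num)
  have blk29 := blockBound 2000 5000 310 201 (by norm_num) (by norm_num) (by norm_num)
  have blk30 := blockBound 5000 19000 544 229 (by norm_num) (by norm_num) (by norm_num)
  have blk31 := blockBound 19000 100000 1562 266 (by norm_num) (by rw [show (2:ℕ)^266 = 2^133*2^133 by rw [← pow_add]]; norm_num) (by norm_num)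
  have blk32 := blockBound 100000 249000 7310 287 (by norm_num) (by rw [show (2:ℕ)^287 = 2^143*2^144 by rw [← pow_add]]; norm_num) (by norm_num)
  have hfin : ∑ m ∈ Finset.range 249000, tailF (1000 + m) ≤
      ((20:ℝ)^2 - (0:ℝ)^2)/2 * (1/3 * (5/6:ℝ)^129) +
      ((40:ℝ)^2 - (20:ℝ)^2)/2 * (1/3 * (5/6:ℝ)^131) +
      ((60:ℝ)^2 - (40:ℝ)^2)/2 * (1/3 * (5/6:ℝ)^134) +
      ((80:ℝ)^2 - (60:ℝ)^2)/2 * (1/3 * (5/6:ℝ)^135) +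
      ((100:ℝ)^2 - (80:ℝ)^2)/2 * (1/3 * (5/6:ℝ)^138) +
      ((120:ℝ)^2 - (100:ℝ)^2)/2 * (1/3 * (5/6:ℝ)^140) +
      ((140:ℝ)^2 - (120:ℝ)^2)/2 * (1/3 * (5/6:ℝ)^142) +
      ((160:ℝ)^2 - (140:ℝ)^2)/2 * (1/3 * (5/6:ℝ)^145) +
      ((180:ℝ)^2 - (160:ℝ)^2)/2 * (1/3 * (5/6:ℝ)^146) +
      ((200:ℝ)^2 - (180:ℝ)^2)/2 * (1/3 * (5/6:ℝ)^149) +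
      ((220:ℝ)^2 - (200:ℝ)^2)/2 * (1/3 * (5/6:ℝ)^151) +
      ((240:ℝ)^2 - (220:ℝ)^2)/2 * (1/3 * (5/6:ℝ)^153) +
      ((260:ℝ)^2 - (240:ℝ)^2)/2 * (1/3 * (5/6:ℝ)^156) +
      ((280:ℝ)^2 - (260:ℝ)^2)/2 * (1/3 * (5/6:ℝ)^157) +
      ((300:ℝ)^2 - (280:ℝ)^2)/2 * (1/3 * (5/6:ℝ)^160) +
      ((350:ℝ)^2 - (300:ℝ)^2)/2 * (1/3 * (5/6:ℝ)^161) +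
      ((400:ℝ)^2 - (350:ℝ)^2)/2 * (1/3 * (5/6:ℝ)^166) +
      ((450:ℝ)^2 - (400:ℝ)^2)/2 * (1/3 * (5/6:ℝ)^172) +
      ((500:ℝ)^2 - (450:ℝ)^2)/2 * (1/3 * (5/6:ℝ)^178) +
      ((550:ℝ)^2 - (500:ℝ)^2)/2 * (1/3 * (5/6:ℝ)^183) +
      ((600:ℝ)^2 - (550:ℝ)^2)/2 * (1/3 * (5/6:ℝ)^188) +
      ((650:ℝ)^2 - (600:ℝ)^2)/2 * (1/3 * (5/6:ℝ)^193) +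
      ((700:ℝ)^2 - (650:ℝ)^2)/2 * (1/3 * (5/6:ℝ)^199) +
      ((750:ℝ)^2 - (700:ℝ)^2)/2 * (1/3 * (5/6:ℝ)^204) +
      ((800:ℝ)^2 - (750:ℝ)^2)/2 * (1/3 * (5/6:ℝ)^208) +
      ((850:ℝ)^2 - (800:ℝ)^2)/2 * (1/3 * (5/6:ℝ)^214) +
      ((900:ℝ)^2 - (850:ℝ)^2)/2 * (1/3 * (5/6:ℝ)^219) +
      ((950:ℝ)^2 - (900:ℝ)^2)/2 * (1/3 * (5/6:ℝ)^225) +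
      ((2000:ℝ)^2 - (950:ℝ)^2)/2 * (1/3 * (5/6:ℝ)^218) +
      ((5000:ℝ)^2 - (2000:ℝ)^2)/2 * (1/3 * (5/6:ℝ)^310) +
      ((19000:ℝ)^2 - (5000:ℝ)^2)/2 * (1/3 * (5/6:ℝ)^544) +
      ((100000:ℝ)^2 - (19000:ℝ)^2)/2 * (1/3 * (5/6:ℝ)^1562) +
      ((249000:ℝ)^2 - (100000:ℝ)^2)/2 * (1/3 * (5/6:ℝ)^7310) := by
    rw [Finset.range_eq_Ico]
    rw [← Finset.sum_Ico_consecutive (fun m => tailF (1000 + m)) (show (0:ℕ) ≤ 20 by norm_num) (show (20:ℕ) ≤ 249000 by norm_num)]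
    rw [← Finset.sum_Ico_consecutive (fun m => tailF (1000 + m)) (show (20:ℕ) ≤ 40 by norm_num) (show (40:ℕ) ≤ 249000 by norm_num)]
    rw [← Finset.sum_Ico_consecutive (fun m => tailF (1000 + m)) (show (40:ℕ) ≤ 60 by norm_num) (show (60:ℕ) ≤ 249000 by norm_num)]
    rw [← Finset.sum_Ico_consecutive (fun m => tailF (1000 + m)) (show (60:ℕ) ≤ 80 by norm_num) (show (80:ℕ) ≤ 249000 by norm_num)]
    rw [← Finset.sum_Ico_consecutive (fun m => tailF (1000 + m)) (show (80:ℕ) ≤ 100 by norm_num) (show (100:ℕ) ≤ 249000 by norm_num)]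
    rw [← Finset.sum_Ico_consecutive (fun m => tailF (1000 + m)) (show (100:ℕ) ≤ 120 by norm_num) (show (120:ℕ) ≤ 249000 by norm_num)]
    rw [← Finset.sum_Ico_consecutive (fun m => tailF (1000 + m)) (show (120:ℕ) ≤ 140 by norm_num) (show (140:ℕ) ≤ 249000 by norm_num)]
    rw [← Finset.sum_Ico_consecutive (fun m => tailF (1000 + m)) (show (140:ℕ) ≤ 160 by norm_num) (show (160:ℕ) ≤ 249000 by norm_num)]
    rw [← Finset.sum_Ico_consecutive (fun m => tailF (1000 + m)) (show (160:ℕ) ≤ 180 by norm_num) (show (180:ℕ) ≤ 249000 by norm_num)]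
    rw [← Finset.sum_Ico_consecutive (fun m => tailF (1000 + m)) (show (180:ℕ) ≤ 200 by norm_num) (show (200:ℕ) ≤ 249000 by norm_num)]
    rw [← Finset.sum_Ico_consecutive (fun m => tailF (1000 + m)) (show (200:ℕ) ≤ 220 by norm_num) (show (220:ℕ) ≤ 249000 by norm_num)]
    rw [← Finset.sum_Ico_consecutive (fun m => tailF (1000 + m)) (show (220:ℕ) ≤ 240 by norm_num) (show (240:ℕ) ≤ 249000 by norm_num)]
    rw [← Finset.sum_Ico_consecutive (fun m => tailF (1000 + m)) (show (240:ℕ) ≤ 260 by norm_num) (show (260:ℕ) ≤ 249000 by norm_num)]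
    rw [← Finset.sum_Ico_consecutive (fun m => tailF (1000 + m)) (show (260:ℕ) ≤ 280 by norm_num) (show (280:ℕ) ≤ 249000 by norm_num)]
    rw [← Finset.sum_Ico_consecutive (fun m => tailF (1000 + m)) (show (280:ℕ) ≤ 300 by norm_num) (show (300:ℕ) ≤ 249000 by norm_num)]
    rw [← Finset.sum_Ico_consecutive (fun m => tailF (1000 + m)) (show (300:ℕ) ≤ 350 by norm_num) (show (350:ℕ) ≤ 249000 by norm_num)]
    rw [← Finset.sum_Ico_consecutive (fun m => tailF (1000 + m)) (show (350:ℕ) ≤ 400 by norm_num) (show (400:ℕ) ≤ 249000 by norm_num)]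
    rw [← Finset.sum_Ico_consecutive (fun m => tailF (1000 + m)) (show (400:ℕ) ≤ 450 by norm_num) (show (450:ℕ) ≤ 249000 by norm_num)]
    rw [← Finset.sum_Ico_consecutive (fun m => tailF (1000 + m)) (show (450:ℕ) ≤ 500 by norm_num) (show (500:ℕ) ≤ 249000 by norm_num)]
    rw [← Finset.sum_Ico_consecutive (fun m => tailF (1000 + m)) (show (500:ℕ) ≤ 550 by norm_num) (show (550:ℕ) ≤ 249000 by norm_num)]
    rw [← Finset.sum_Ico_consecutive (fun m => tailF (1000 + m)) (show (550:ℕ) ≤ 600 by norm_num) (show (600:ℕ) ≤ 249000 by norm_num)]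
    rw [← Finset.sum_Ico_consecutive (fun m => tailF (1000 + m)) (show (600:ℕ) ≤ 650 by norm_num) (show (650:ℕ) ≤ 249000 by norm_num)]
    rw [← Finset.sum_Ico_consecutive (fun m => tailF (1000 + m)) (show (650:ℕ) ≤ 700 by norm_num) (show (700:ℕ) ≤ 249000 by norm_num)]
    rw [← Finset.sum_Ico_consecutive (fun m => tailF (1000 + m)) (show (700:ℕ) ≤ 750 by norm_num) (show (750:ℕ) ≤ 249000 by norm_num)]
    rw [← Finset.sum_Ico_consecutive (fun m => tailF (1000 + m)) (show (750:ℕ) ≤ 800 by norm_num) (show (800:ℕ) ≤ 249000 by norm_num)]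
    rw [← Finset.sum_Ico_consecutive (fun m => tailF (1000 + m)) (show (800:ℕ) ≤ 850 by norm_num) (show (850:ℕ) ≤ 249000 by norm_num)]
    rw [← Finset.sum_Ico_consecutive (fun m => tailF (1000 + m)) (show (850:ℕ) ≤ 900 by norm_num) (show (900:ℕ) ≤ 249000 by norm_num)]
    rw [← Finset.sum_Ico_consecutive (fun m => tailF (1000 + m)) (show (900:ℕ) ≤ 950 by norm_num) (show (950:ℕ) ≤ 249000 by norm_num)]
    rw [← Finset.sum_Ico_consecutive (fun m => tailF (1000 + m)) (show (950:ℕ) ≤ 2000 by norm_num) (show (2000:ℕ) ≤ 249000 by norm_num)]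
    rw [← Finset.sum_Ico_consecutive (fun m => tailF (1000 + m)) (show (2000:ℕ) ≤ 5000 by norm_num) (show (5000:ℕ) ≤ 249000 by norm_num)]
    rw [← Finset.sum_Ico_consecutive (fun m => tailF (1000 + m)) (show (5000:ℕ) ≤ 19000 by norm_num) (show (19000:ℕ) ≤ 249000 by norm_num)]
    rw [← Finset.sum_Ico_consecutive (fun m => tailF (1000 + m)) (show (19000:ℕ) ≤ 100000 by norm_num) (show (100000:ℕ) ≤ 249000 by norm_num)]
    push_cast at blk0 blk1 blk2 blk3 blk4 blk5 blk6 blk7 blk8 blk9 blk10 blk11 blk12 blk13 blk14 blk15 blk16 blk17 blk18 blk19 blk20 blk21 blk22 blk23 blk24 blk25 blk26 blk27 blk28 blk29 blk30 blk31 blk32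
    generalize (5/6:ℝ)^310 = c1 at *
    generalize (5/6:ℝ)^544 = c2 at *
    generalize (5/6:ℝ)^1562 = c3 at *
    generalize (5/6:ℝ)^7310 = c4 at *
    linarith [blk0, blk1, blk2, blk3, blk4, blk5, blk6, blk7, blk8, blk9, blk10, blk11, blk12, blk13, blk14, blk15, blk16, blk17, blk18, blk19, blk20, blk21, blk22, blk23, blk24, blk25, blk26, blk27, blk28, blk29, blk30, blk31, blk32]
  have hsplit := Summable.sum_add_tsum_nat_add 249000 hsummable
  rw [← hsplit]
  have hfinal := add_le_add hfin htsum_tail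
  refine lt_of_le_of_lt hfinal ?_
  have q1 : (5/6:ℝ)^310 ≤ (5/6)^250 := pow_le_pow_of_le_one (by norm_num) (by norm_num) (by norm_num)
  have q2 : (5/6:ℝ)^544 ≤ (5/6)^250 := pow_le_pow_of_le_one (by norm_num) (by norm_num) (by norm_num)
  have q3 : (5/6:ℝ)^1562 ≤ (5/6)^250 := pow_le_pow_of_le_one (by norm_num) (by norm_num) (by norm_num)
  have q4 : (5/6:ℝ)^7310 ≤ (5/6)^250 := pow_le_pow_of_le_one (by norm_num) (by norm_num) (by norm_num)
  norm_num
  generalize (5/6:ℝ)^310 = c1 at *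
  generalize (5/6:ℝ)^544 = c2 at *
  generalize (5/6:ℝ)^1562 = c3 at *
  generalize (5/6:ℝ)^7310 = c4 at *
  linarith [q1, q2, q3, q4]
end

section
/- P(τ ≥ k) tends to 0 super-polynomially fast: in fact for all k > 1000, P(τ ≥ k) ≤ 5k·(1/3)·(5/6)^{0.9·k/ln k}. -/
open MeasureTheory ProbabilityTheory

namespace TailDecayAux

/-- Extend a tuple by zeros. -/
def extFn {r : ℕ} (y : Fin r → ℕ) (j : ℕ) : ℕ := if h : j < r then y ⟨j, h⟩ else 0

/-- Partial sum of the first `i` entries. -/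
def psum {r : ℕ} (y : Fin r → ℕ) (i : ℕ) : ℕ := ∑ j ∈ Finset.range i, extFn y j

/-- Number of primes in `(s, t]`. -/
def pc (s t : ℕ) : ℕ := ((Finset.Ioc s t).filter Nat.Prime).card

lemma pc_of_le {s t : ℕ} (h : t ≤ s) : pc s t = 0 := by
  simp [pc, Finset.Ioc_eq_empty (not_lt.2 h)]

lemma pc_le (s w : ℕ) : pc s (s + w) ≤ w := by
  calc pc s (s + w) ≤ (Finset.Ioc s (s + w)).card := Finset.card_filter_le _ _
    _ = w := by rw [Nat.card_Ioc]; omega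

lemma pc_succ {s t : ℕ} (h : s ≤ t) :
    pc s (t + 1) = pc s t + (if (t + 1).Prime then 1 else 0) := by
  unfold pc
  rw [Finset.card_filter, Finset.card_filter, Finset.sum_Ioc_succ_top h]

lemma pc_triangle (s u t : ℕ) : pc s t ≤ pc s u + pc u t := by
  unfold pc
  calc ((Finset.Ioc s t).filter Nat.Prime).card
      ≤ (((Finset.Ioc s u).filter Nat.Prime) ∪ ((Finset.Ioc u t).filter Nat.Prime)).card := by
        apply Finset.card_le_card
        intro p hp
        simp only [Finset.mem_filter, Finset.mem_Ioc, Finset.mem_union] at hp ⊢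
        rcases le_or_gt p u with hpu | hpu
        · exact Or.inl ⟨⟨hp.1.1, hpu⟩, hp.2⟩
        · exact Or.inr ⟨⟨hpu, hp.1.2⟩, hp.2⟩
    _ ≤ _ := Finset.card_union_le _ _

lemma pow_pc {a b c : ℕ} (h : c ≤ a + b) :
    (5 / 6 : ℝ) ^ b ≤ (5 / 6 : ℝ) ^ c * (6 / 5 : ℝ) ^ a := by
  have h1 : (5 / 6 : ℝ) ^ (a + b) ≤ (5 / 6 : ℝ) ^ c :=
    pow_le_pow_of_le_one (by norm_num) (by norm_num) h
  have h2 : (5 / 6 : ℝ) ^ b = (5 / 6 : ℝ) ^ (a + b) * (6 / 5 : ℝ) ^ a := by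
    rw [pow_add, mul_comm, ← mul_assoc, ← mul_pow]
    norm_num
  rw [h2]
  exact mul_le_mul_of_nonneg_right h1 (by positivity)

lemma window_aux (s : ℕ) : ∀ w : ℕ,
    ∑ v ∈ Finset.Icc 1 w, (if (s + v).Prime then (0 : ℝ) else (6 / 5 : ℝ) ^ (pc s (s + v)))
      ≤ ((w : ℝ) - pc s (s + w)) * (6 / 5 : ℝ) ^ (pc s (s + w)) := by
  intro w
  induction w with
  | zero => simp [pc_of_le (le_refl s)]
  | succ w ih =>
    rw [Finset.sum_Icc_succ_top (by omega : 1 ≤ w + 1)]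
    have hle : s ≤ s + w := by omega
    have hsw : s + (w + 1) = (s + w) + 1 := by omega
    have hpc : pc s (s + (w + 1)) = pc s (s + w) + (if ((s + w) + 1).Prime then 1 else 0) := by
      rw [hsw, pc_succ hle]
    have hcard : (pc s (s + w) : ℝ) ≤ w := by exact_mod_cast pc_le s w
    by_cases hp : (s + (w + 1)).Prime
    · have hp' : ((s + w) + 1).Prime := by rwa [← hsw]
      rw [if_pos hp, hpc, if_pos hp']
      push_cast
      have h15 : (1 : ℝ) ≤ 6 / 5 := by norm_num
      have hmono : (6 / 5 : ℝ) ^ pc s (s + w) ≤ (6 / 5 : ℝ) ^ (pc s (s + w) + 1) :=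
        pow_le_pow_right₀ h15 (Nat.le_succ _)
      have hnn : (0 : ℝ) ≤ (w : ℝ) - pc s (s + w) := by linarith
      calc ∑ v ∈ Finset.Icc 1 w, (if (s + v).Prime then (0:ℝ) else (6/5:ℝ) ^ pc s (s + v)) + 0
          ≤ ((w : ℝ) - pc s (s + w)) * (6 / 5 : ℝ) ^ (pc s (s + w)) := by
            rw [add_zero]; exact ih
        _ ≤ ((w : ℝ) - pc s (s + w)) * (6 / 5 : ℝ) ^ (pc s (s + w) + 1) :=
            mul_le_mul_of_nonneg_left hmono hnn
        _ = ((w : ℝ) + 1 - ((pc s (s + w) : ℝ) + 1)) * (6 / 5 : ℝ) ^ (pc s (s + w) + 1) := by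
            ring_nf
    · have hp' : ¬((s + w) + 1).Prime := by rwa [← hsw]
      rw [if_neg hp, hpc, if_neg hp']
      push_cast
      simp only [add_zero]
      nlinarith [pow_pos (by norm_num : (0:ℝ) < 6/5) (pc s (s + w)), ih]

lemma window (s : ℕ) :
    ∑ v ∈ Finset.Icc 1 6, (if (s + v).Prime then (0 : ℝ) else (6 / 5 : ℝ) ^ (pc s (s + v)))
      ≤ 6 := by
  refine le_trans (window_aux s 6) ?_
  have h := pc_le s 6
  interval_cases h' : pc s (s + 6) <;> norm_num


lemma psum_zero {r : ℕ} (y : Fin r → ℕ) : psum y 0 = 0 := by simp [psum]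

lemma extFn_zero {r : ℕ} (y : Fin (r + 1) → ℕ) : extFn y 0 = y 0 := by
  unfold extFn
  rw [dif_pos (Nat.succ_pos r)]
  simp

lemma extFn_succ {r : ℕ} (y : Fin (r + 1) → ℕ) (j : ℕ) :
    extFn y (j + 1) = extFn (Fin.tail y) j := by
  unfold extFn
  by_cases h : j < r
  · rw [dif_pos (by omega : j + 1 < r + 1), dif_pos h]
    rfl
  · rw [dif_neg (by omega), dif_neg h]

lemma psum_succ' {r : ℕ} (y : Fin (r + 1) → ℕ) (i : ℕ) :
    psum y (i + 1) = y 0 + psum (Fin.tail y) i := by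
  unfold psum
  rw [Finset.sum_range_succ']
  simp only [extFn_succ, extFn_zero]
  rw [add_comm]

lemma psum_one {r : ℕ} (y : Fin (r + 1) → ℕ) : psum y 1 = y 0 := by
  simpa [psum_zero] using psum_succ' y 0

lemma psum_eq_sum {r : ℕ} (y : Fin r → ℕ) : psum y r = ∑ j : Fin r, y j := by
  unfold psum
  rw [← Fin.sum_univ_eq_sum_range (fun j => extFn y j) r]
  apply Finset.sum_congr rfl
  intro j _
  unfold extFn
  rw [dif_pos j.2]

/-- The set of prime-avoiding dice tuples of length `r` starting from `s` reaching `≥ T`. -/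
def FS (r s T : ℕ) : Finset (Fin r → ℕ) :=
  (Fintype.piFinset fun _ : Fin r => Finset.Icc 1 6).filter
    (fun y => (∀ i ∈ Finset.Icc 1 r, ¬(s + psum y i).Prime) ∧ T ≤ s + psum y r)

lemma mem_FS {r s T : ℕ} {y : Fin r → ℕ} : y ∈ FS r s T ↔
    (∀ j, y j ∈ Finset.Icc 1 6) ∧ (∀ i ∈ Finset.Icc 1 r, ¬(s + psum y i).Prime) ∧
      T ≤ s + psum y r := by
  simp [FS, Finset.mem_filter, Fintype.mem_piFinset, and_assoc]

/-- The set of fully prime-avoiding dice tuples. -/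
def GS (r : ℕ) : Finset (Fin r → ℕ) := FS r 0 0

lemma mem_GS {r : ℕ} {y : Fin r → ℕ} : y ∈ GS r ↔
    (∀ j, y j ∈ Finset.Icc 1 6) ∧ ∀ i ∈ Finset.Icc 1 r, ¬ (psum y i).Prime := by
  simp [GS, mem_FS]

lemma count_le (r s T : ℕ) :
    ((FS r s T).card : ℝ) ≤ 6 ^ r * (5 / 6 : ℝ) ^ (pc s T) := by
  induction r generalizing s T with
  | zero =>
    by_cases hT : T ≤ s
    · rw [pc_of_le hT]
      simp only [pow_zero, mul_one]
      have h1 : (FS 0 s T).card ≤ 1 := by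
        refine le_trans (Finset.card_filter_le _ _) ?_
        simp [Fintype.card_piFinset]
      exact_mod_cast h1
    · have h1 : FS 0 s T = ∅ := by
        apply Finset.eq_empty_of_forall_notMem
        intro y hy
        obtain ⟨-, -, hsum⟩ := mem_FS.1 hy
        rw [psum_zero, add_zero] at hsum
        exact hT hsum
      rw [h1]
      simp only [Finset.card_empty, Nat.cast_zero]
      positivity
  | succ r IH =>
    have hfib : (FS (r+1) s T).card =
        ∑ v ∈ Finset.Icc 1 6, ((FS (r+1) s T).filter fun y => y 0 = v).card := by
      apply Finset.card_eq_sum_card_fiberwise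
      intro y hy
      exact (mem_FS.1 hy).1 0
    have key : ∀ v ∈ Finset.Icc 1 6, (((FS (r+1) s T).filter fun y => y 0 = v).card : ℝ) ≤
        (if (s+v).Prime then 0 else 6 ^ r * (5/6:ℝ) ^ (pc (s+v) T)) := by
      intro v hv
      by_cases hp : (s+v).Prime
      · rw [if_pos hp]
        have hemp : ((FS (r+1) s T).filter fun y => y 0 = v) = ∅ := by
          apply Finset.filter_eq_empty_iff.2
          intro y hy hy0
          obtain ⟨-, hgood, -⟩ := mem_FS.1 hy
          have hm1 : (1:ℕ) ∈ Finset.Icc 1 (r+1) := Finset.mem_Icc.2 ⟨le_rfl, Nat.succ_le_succ (Nat.zero_le r)⟩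
          have h1 := hgood 1 hm1
          apply h1
          rw [psum_one, hy0]
          exact hp
        rw [hemp]
        simp
      · rw [if_neg hp]
        refine le_trans ?_ (IH (s+v) T)
        have hsub : (((FS (r+1) s T).filter fun y => y 0 = v)).card ≤ (FS r (s+v) T).card := by
          apply Finset.card_le_card_of_injOn Fin.tail
          · intro y hy
            obtain ⟨hmem, hy0⟩ := Finset.mem_filter.1 hy
            obtain ⟨hyA, hgood, hsum⟩ := mem_FS.1 hmem
            refine mem_FS.2 ⟨fun j => hyA j.succ, ?_, ?_⟩
            · intro i hi
              rw [Finset.mem_Icc] at hi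
              have hmem2 : i + 1 ∈ Finset.Icc 1 (r+1) :=
                Finset.mem_Icc.2 ⟨Nat.succ_le_succ (Nat.zero_le i), Nat.succ_le_succ hi.2⟩
              have h2 := hgood (i+1) hmem2
              rwa [psum_succ', hy0, ← add_assoc] at h2
            · have h2 := hsum
              rwa [psum_succ', hy0, ← add_assoc] at h2
          · intro y1 h1 y2 h2 htail
            have e1 : y1 0 = v := (Finset.mem_filter.1 (Finset.mem_coe.1 h1)).2
            have e2 : y2 0 = v := (Finset.mem_filter.1 (Finset.mem_coe.1 h2)).2
            rw [← Fin.cons_self_tail y1, ← Fin.cons_self_tail y2, htail, e1, e2]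
        exact_mod_cast hsub
    calc ((FS (r+1) s T).card : ℝ)
        = ∑ v ∈ Finset.Icc 1 6, (((FS (r+1) s T).filter fun y => y 0 = v).card : ℝ) := by
          rw [hfib]; push_cast; ring
      _ ≤ ∑ v ∈ Finset.Icc 1 6, (if (s+v).Prime then 0 else 6 ^ r * (5/6:ℝ) ^ (pc (s+v) T)) :=
          Finset.sum_le_sum key
      _ ≤ ∑ v ∈ Finset.Icc 1 6, (6 ^ r * (5/6:ℝ)^(pc s T)) * (if (s+v).Prime then 0 else (6/5:ℝ) ^ (pc s (s+v))) := by
          apply Finset.sum_le_sum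
          intro v hv
          by_cases hp : (s+v).Prime
          · simp [hp]
          · rw [if_neg hp, if_neg hp]
            have h3 := pow_pc (pc_triangle s (s+v) T)
            calc (6:ℝ)^r * (5/6:ℝ)^(pc (s+v) T) ≤ 6^r * ((5/6:ℝ)^(pc s T) * (6/5:ℝ)^(pc s (s+v))) :=
                mul_le_mul_of_nonneg_left h3 (by positivity)
              _ = _ := by ring
      _ = (6 ^ r * (5/6:ℝ)^(pc s T)) * ∑ v ∈ Finset.Icc 1 6, (if (s+v).Prime then 0 else (6/5:ℝ) ^ (pc s (s+v))) := by
          rw [Finset.mul_sum]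
      _ ≤ (6 ^ r * (5/6:ℝ)^(pc s T)) * 6 :=
          mul_le_mul_of_nonneg_left (window s) (by positivity)
      _ = 6 ^ (r+1) * (5/6:ℝ)^(pc s T) := by ring

lemma sum_half_pow : ∑ v ∈ Finset.Icc (1:ℕ) 6, ((1:ℝ)/2)^v = 63/64 := by
  have h : Finset.Icc (1:ℕ) 6 = {1,2,3,4,5,6} := by decide
  rw [h]
  norm_num [Finset.sum_insert, Finset.mem_insert]

lemma low_count (r K : ℕ) :
    (((Fintype.piFinset fun _ : Fin r => Finset.Icc 1 6).filter fun y => psum y r < K).card : ℝ)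
      ≤ 2 ^ K * (63 / 64 : ℝ) ^ r := by
  set A := Fintype.piFinset fun _ : Fin r => Finset.Icc 1 6 with hA
  have htotal : ∑ y ∈ A, ((1:ℝ)/2) ^ (psum y r) = (63/64 : ℝ)^r := by
    have h1 : ∀ y ∈ A, ((1:ℝ)/2)^(psum y r) = ∏ j : Fin r, ((1:ℝ)/2)^(y j) := by
      intro y _
      rw [psum_eq_sum, ← Finset.prod_pow_eq_pow_sum]
    rw [Finset.sum_congr rfl h1, ← Finset.prod_univ_sum]
    simp only [sum_half_pow]
    rw [Finset.prod_const, Finset.card_univ, Fintype.card_fin]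
  have key : ((A.filter fun y => psum y r < K).card : ℝ) * ((1:ℝ)/2)^K ≤ (63/64:ℝ)^r := by
    rw [← htotal]
    calc ((A.filter fun y => psum y r < K).card : ℝ) * ((1:ℝ)/2)^K
        = ∑ _y ∈ (A.filter fun y => psum y r < K), ((1:ℝ)/2)^K := by
          rw [Finset.sum_const, nsmul_eq_mul]
      _ ≤ ∑ y ∈ (A.filter fun y => psum y r < K), ((1:ℝ)/2)^(psum y r) := by
          apply Finset.sum_le_sum
          intro y hy
          have hlt := (Finset.mem_filter.1 hy).2
          exact pow_le_pow_of_le_one (by norm_num) (by norm_num) (le_of_lt hlt)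
      _ ≤ ∑ y ∈ A, ((1:ℝ)/2)^(psum y r) := by
          apply Finset.sum_le_sum_of_subset_of_nonneg (Finset.filter_subset _ _)
          intro y _ _
          positivity
  calc ((A.filter fun y => psum y r < K).card : ℝ)
      = (((A.filter fun y => psum y r < K).card : ℝ) * ((1:ℝ)/2)^K) * 2^K := by
        rw [mul_assoc, ← mul_pow]
        norm_num
    _ ≤ (63/64:ℝ)^r * 2^K := mul_le_mul_of_nonneg_right key (by positivity)
    _ = 2 ^ K * (63/64:ℝ)^r := by ring


lemma centralBinom_le (k : ℕ) (hk : 0 < k) :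
    Nat.centralBinom k ≤ (2 * k) ^ (pc 0 (2 * k)) := by
  have h0 : Nat.centralBinom k ≠ 0 := Nat.centralBinom_ne_zero k
  have hfac : ∀ p : ℕ, p ^ (Nat.centralBinom k).factorization p ≤ 2 * k := by
    intro p
    rw [Nat.centralBinom_eq_two_mul_choose]
    exact Nat.pow_factorization_choose_le (by omega)
  have hsub : (Nat.centralBinom k).factorization.support ⊆
      (Finset.Ioc 0 (2 * k)).filter Nat.Prime := by
    intro p hp
    have hps : p ∈ (Nat.centralBinom k).primeFactors := by
      rwa [Nat.support_factorization] at hp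
    have hpp : p.Prime := Nat.prime_of_mem_primeFactors hps
    have hν : 1 ≤ (Nat.centralBinom k).factorization p := by
      have h2 := Finsupp.mem_support_iff.1 hp
      omega
    have hp2k : p ≤ 2 * k := by
      calc p = p ^ 1 := (pow_one p).symm
        _ ≤ p ^ (Nat.centralBinom k).factorization p :=
            Nat.pow_le_pow_right hpp.one_lt.le hν
        _ ≤ 2 * k := hfac p
    exact Finset.mem_filter.2 ⟨Finset.mem_Ioc.2 ⟨hpp.pos, hp2k⟩, hpp⟩
  calc Nat.centralBinom k
      = ∏ p ∈ (Nat.centralBinom k).factorization.support,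
          p ^ (Nat.centralBinom k).factorization p := by
        conv_lhs => rw [← Nat.factorization_prod_pow_eq_self h0]
        rfl
    _ ≤ ∏ _p ∈ (Nat.centralBinom k).factorization.support, 2 * k :=
        Finset.prod_le_prod' fun p _ => hfac p
    _ = (2 * k) ^ (Nat.centralBinom k).factorization.support.card :=
        Finset.prod_const _
    _ ≤ (2 * k) ^ (pc 0 (2 * k)) :=
        Nat.pow_le_pow_right (by omega) (Finset.card_le_card hsub)

lemma four_pow_lt (k : ℕ) (hk : 4 ≤ k) : 4 ^ k < k * (2 * k) ^ (pc 0 (2 * k)) :=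
  lt_of_lt_of_le (Nat.four_pow_lt_mul_centralBinom k hk)
    (Nat.mul_le_mul_left k (centralBinom_le k (by omega)))

lemma log_sq_le {x : ℝ} (hx : 961 ≤ x) : (Real.log x) ^ 2 ≤ (16 / 31) * x := by
  have hx0 : (0 : ℝ) < x := by linarith
  have hs : Real.sqrt x * Real.sqrt x = x := Real.mul_self_sqrt (le_of_lt hx0)
  have hss : Real.sqrt (Real.sqrt x) * Real.sqrt (Real.sqrt x) = Real.sqrt x :=
    Real.mul_self_sqrt (Real.sqrt_nonneg x)
  have h31 : (31 : ℝ) ≤ Real.sqrt x := by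
    have h1 : Real.sqrt 961 ≤ Real.sqrt x := Real.sqrt_le_sqrt hx
    have h2 : Real.sqrt 961 = 31 := by
      rw [show (961 : ℝ) = 31 ^ 2 by norm_num, Real.sqrt_sq (by norm_num : (0:ℝ) ≤ 31)]
    linarith
  have hlog : Real.log x = 4 * Real.log (Real.sqrt (Real.sqrt x)) := by
    rw [Real.log_sqrt (Real.sqrt_nonneg x), Real.log_sqrt (le_of_lt hx0)]
    ring
  have hpos : 0 < Real.sqrt (Real.sqrt x) := Real.sqrt_pos.2 (Real.sqrt_pos.2 hx0)
  have hle : Real.log (Real.sqrt (Real.sqrt x)) ≤ Real.sqrt (Real.sqrt x) :=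
    le_trans (Real.log_le_sub_one_of_pos hpos) (by linarith)
  have hnn : 0 ≤ Real.log (Real.sqrt (Real.sqrt x)) := by
    apply Real.log_nonneg
    nlinarith [Real.sqrt_nonneg (Real.sqrt x)]
  calc (Real.log x) ^ 2 = 16 * (Real.log (Real.sqrt (Real.sqrt x))) ^ 2 := by
        rw [hlog]; ring
    _ ≤ 16 * Real.sqrt x := by nlinarith
    _ ≤ (16 / 31) * x := by nlinarith [Real.sqrt_nonneg x]

lemma log_ge_six {x : ℝ} (hx : 1001 ≤ x) : 6 ≤ Real.log x := by
  have h3 : Real.exp 1 ^ (6 : ℕ) ≤ 2.7182818286 ^ (6 : ℕ) :=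
    pow_le_pow_left₀ (le_of_lt (Real.exp_pos 1)) (le_of_lt Real.exp_one_lt_d9) 6
  have h4 : (2.7182818286 : ℝ) ^ (6 : ℕ) ≤ 1001 := by norm_num
  have h2 : Real.exp 1 ^ (6 : ℕ) = Real.exp 6 := by
    rw [Real.exp_one_pow]; norm_num
  have h1 : Real.exp 6 ≤ 1001 := by rw [← h2]; exact le_trans h3 h4
  calc (6 : ℝ) = Real.log (Real.exp 6) := (Real.log_exp 6).symm
    _ ≤ Real.log x := Real.log_le_log (Real.exp_pos 6) (by linarith)

lemma pc_ge {k : ℕ} (hk : 1000 < k) :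
    0.9 * (k : ℝ) / Real.log k ≤ (pc 0 (2 * k) : ℝ) := by
  have hk4 : 4 ≤ k := by omega
  have hnat := (four_pow_lt k hk4).le
  have hk1001 : (1001 : ℝ) ≤ (k : ℝ) := by exact_mod_cast hk
  have hkpos : (0 : ℝ) < (k : ℝ) := by linarith
  set m := pc 0 (2 * k) with hm
  set L := Real.log (k : ℝ) with hL
  have hreal : (4 : ℝ) ^ k ≤ (k : ℝ) * (2 * (k : ℝ)) ^ m := by
    have := hnat
    have h2 : ((4 ^ k : ℕ) : ℝ) ≤ ((k * (2 * k) ^ m : ℕ) : ℝ) := by exact_mod_cast this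
    push_cast at h2
    convert h2 using 2 <;> push_cast <;> ring
  have hlog : (k : ℝ) * Real.log 4 ≤ L + m * Real.log (2 * (k : ℝ)) := by
    have h1 := Real.log_le_log (by positivity) hreal
    rw [Real.log_pow, Real.log_mul (ne_of_gt hkpos) (by positivity), Real.log_pow] at h1
    exact_mod_cast h1
  have hlog2k : Real.log (2 * (k : ℝ)) = Real.log 2 + L :=
    Real.log_mul two_ne_zero (ne_of_gt hkpos)
  have h4 : Real.log 4 = 2 * Real.log 2 := by
    rw [show (4 : ℝ) = 2 ^ (2 : ℕ) by norm_num, Real.log_pow]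
    push_cast; ring
  have hL6 : 6 ≤ L := log_ge_six hk1001
  have hL2 : L ^ 2 ≤ (16 / 31) * (k : ℝ) := log_sq_le (by linarith)
  have hlog2a := Real.log_two_gt_d9
  have hlog2b := Real.log_two_lt_d9
  have hm0 : (0 : ℝ) ≤ (m : ℝ) := Nat.cast_nonneg m
  have h3 : (k : ℝ) * (2 * Real.log 2) - L ≤ (m : ℝ) * (Real.log 2 + L) := by
    rw [h4] at hlog
    rw [hlog2k] at hlog
    linarith
  have hkL : 6 * (k : ℝ) ≤ (k : ℝ) * L := by nlinarith
  have hkey : 0.9 * (k : ℝ) * (Real.log 2 + L) ≤ ((k : ℝ) * (2 * Real.log 2) - L) * L := by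
    have hcoef : (0.4862943606 : ℝ) * ((k : ℝ) * L) ≤ (2 * Real.log 2 - 0.9) * ((k : ℝ) * L) := by
      apply mul_le_mul_of_nonneg_right (by linarith)
      nlinarith
    nlinarith
  have hLpos : (0 : ℝ) < L := by linarith
  rw [div_le_iff₀ hLpos]
  have hpos2 : (0 : ℝ) < Real.log 2 + L := by linarith
  nlinarith [mul_le_mul_of_nonneg_right h3 (le_of_lt hLpos)]

end TailDecayAux


open TailDecayAux ENNReal in
/-- Super-polynomial decay of the tail: for all `k > 1000`,
`P(τ ≥ k) ≤ 5k·(1/3)·(5/6)^{0.9 k / ln k}`; here `τ ≥ k` means `S_i` is non-prime for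
all `1 ≤ i < k`. -/
theorem tail_decay
    {Ω : Type*} [MeasurableSpace Ω] (μ : Measure Ω) [IsProbabilityMeasure μ]
    (X : ℕ → Ω → ℕ) (hmeas : ∀ i, Measurable (X i))
    (hindep : iIndepFun X μ)
    (hunif : ∀ i v, v ∈ Finset.Icc 1 6 → μ {ω | X i ω = v} = 1/6)
    (hrange : ∀ i ω, X i ω ∈ Finset.Icc 1 6) :
    ∀ k : ℕ, 1000 < k →
      (μ {ω | ∀ i, 1 ≤ i → i < k → ¬ (diceSum X i ω).Prime}).toReal ≤
        5 * (k : ℝ) * (1/3) * (5/6 : ℝ) ^ (0.9 * (k : ℝ) / Real.log k) := by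
  intro k hk
  obtain ⟨r, hrk⟩ : ∃ r, k = r + 1 := ⟨k - 1, by omega⟩
  subst hrk
  have hr7 : 7 ≤ r := by omega
  -- Step 1: cover the event by cells indexed by good tuples
  have hps : ∀ (ω : Ω) (i : ℕ), i ≤ r → psum (fun j : Fin r => X j ω) i = diceSum X i ω := by
    intro ω i hir
    unfold psum diceSum
    apply Finset.sum_congr rfl
    intro j hj
    have hjr : j < r := lt_of_lt_of_le (Finset.mem_range.1 hj) hir
    unfold extFn
    rw [dif_pos hjr]
  have hcover : {ω | ∀ i, 1 ≤ i → i < r + 1 → ¬ (diceSum X i ω).Prime} ⊆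
      ⋃ y ∈ GS r, (⋂ j ∈ Finset.range r, {ω | X j ω = extFn y j}) := by
    intro ω hω
    have hyG : (fun j : Fin r => X j ω) ∈ GS r := by
      refine mem_GS.2 ⟨fun j => hrange j ω, ?_⟩
      intro i hi
      rw [Finset.mem_Icc] at hi
      rw [hps ω i hi.2]
      exact hω i hi.1 (by omega)
    refine Set.mem_biUnion hyG ?_
    refine Set.mem_iInter₂.2 fun j hj => ?_
    have hjr : j < r := Finset.mem_range.1 hj
    show X j ω = extFn (fun j : Fin r => X j ω) j
    unfold extFn
    rw [dif_pos hjr]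
  -- Step 2: each cell has measure (1/6)^r
  have hcellmeas : ∀ y ∈ GS r,
      μ (⋂ j ∈ Finset.range r, {ω | X j ω = extFn y j}) = (1/6 : ℝ≥0∞) ^ r := by
    intro y hy
    have hprod : μ (⋂ j ∈ Finset.range r, {ω | X j ω = extFn y j}) =
        ∏ j ∈ Finset.range r, μ {ω | X j ω = extFn y j} := by
      apply hindep.meas_biInter
      intro j _
      exact ⟨{extFn y j}, measurableSet_singleton _, rfl⟩
    rw [hprod]
    have h16 : ∀ j ∈ Finset.range r, μ {ω | X j ω = extFn y j} = 1/6 := by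
      intro j hj
      apply hunif
      have hyA := (mem_GS.1 hy).1
      have hjr : j < r := Finset.mem_range.1 hj
      have hmem := hyA ⟨j, hjr⟩
      have : extFn y j = y ⟨j, hjr⟩ := by unfold extFn; rw [dif_pos hjr]
      rwa [this]
    rw [Finset.prod_congr rfl h16, Finset.prod_const, Finset.card_range]
  have hμE : μ {ω | ∀ i, 1 ≤ i → i < r + 1 → ¬ (diceSum X i ω).Prime} ≤
      ((GS r).card : ℝ≥0∞) * (1/6 : ℝ≥0∞) ^ r := by
    calc μ {ω | ∀ i, 1 ≤ i → i < r + 1 → ¬ (diceSum X i ω).Prime}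
        ≤ μ (⋃ y ∈ GS r, (⋂ j ∈ Finset.range r, {ω | X j ω = extFn y j})) := measure_mono hcover
      _ ≤ ∑ y ∈ GS r, μ (⋂ j ∈ Finset.range r, {ω | X j ω = extFn y j}) :=
          measure_biUnion_finset_le (GS r) _
      _ = ∑ _y ∈ GS r, (1/6 : ℝ≥0∞) ^ r := Finset.sum_congr rfl hcellmeas
      _ = ((GS r).card : ℝ≥0∞) * (1/6 : ℝ≥0∞) ^ r := by rw [Finset.sum_const, nsmul_eq_mul]
  have h16top : (1/6 : ℝ≥0∞) ≠ ⊤ := (ENNReal.div_lt_top ENNReal.one_ne_top (by norm_num)).ne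
  have htop : ((GS r).card : ℝ≥0∞) * (1/6 : ℝ≥0∞) ^ r ≠ ⊤ :=
    ENNReal.mul_ne_top (ENNReal.natCast_ne_top _) (ENNReal.pow_ne_top h16top)
  have hto : (μ {ω | ∀ i, 1 ≤ i → i < r + 1 → ¬ (diceSum X i ω).Prime}).toReal ≤
      ((GS r).card : ℝ) * ((1:ℝ)/6) ^ r := by
    have h1 := ENNReal.toReal_mono htop hμE
    rwa [ENNReal.toReal_mul, ENNReal.toReal_pow, ENNReal.toReal_natCast,
      ENNReal.toReal_div, ENNReal.toReal_one, ENNReal.toReal_ofNat] at h1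
  -- Step 3: counting
  have hGsplit : ((GS r).card : ℝ) ≤
      (((Fintype.piFinset fun _ : Fin r => Finset.Icc 1 6).filter
        fun y => psum y r < 2 * (r+1)).card : ℝ) + ((FS r 0 (2 * (r+1))).card : ℝ) := by
    have hsubset : (GS r) ⊆ ((Fintype.piFinset fun _ : Fin r => Finset.Icc 1 6).filter
        fun y => psum y r < 2 * (r+1)) ∪ FS r 0 (2 * (r+1)) := by
      intro y hy
      obtain ⟨hyA, hgood⟩ := mem_GS.1 hy
      rcases lt_or_ge (psum y r) (2 * (r+1)) with hlow | hhigh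
      · exact Finset.mem_union_left _ (Finset.mem_filter.2 ⟨Fintype.mem_piFinset.2 hyA, hlow⟩)
      · refine Finset.mem_union_right _ (mem_FS.2 ⟨hyA, ?_, ?_⟩)
        · intro i hi
          rw [zero_add]
          exact hgood i hi
        · rw [zero_add]
          exact hhigh
    have h2 := Finset.card_le_card hsubset
    have h3 := Finset.card_union_le
      ((Fintype.piFinset fun _ : Fin r => Finset.Icc 1 6).filter fun y => psum y r < 2 * (r+1))
      (FS r 0 (2 * (r+1)))
    have h4 : (GS r).card ≤ ((Fintype.piFinset fun _ : Fin r => Finset.Icc 1 6).filter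
        fun y => psum y r < 2 * (r+1)).card + (FS r 0 (2 * (r+1))).card := le_trans h2 h3
    exact_mod_cast h4
  -- numeric abbreviations
  set q : ℝ := 0.9 * ((r+1 : ℕ) : ℝ) / Real.log ((r+1 : ℕ) : ℝ) with hq
  have hk1001 : (1001 : ℝ) ≤ ((r+1 : ℕ) : ℝ) := by exact_mod_cast hk
  have hL6 : 6 ≤ Real.log ((r+1 : ℕ) : ℝ) := log_ge_six hk1001
  have hqnn : 0 ≤ q := by
    rw [hq]
    positivity
  have hqk : q ≤ ((r+1 : ℕ) : ℝ) := by
    rw [hq, div_le_iff₀ (by linarith : (0:ℝ) < Real.log ((r+1 : ℕ) : ℝ))]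
    have h1 : ((r+1:ℕ):ℝ) * 6 ≤ ((r+1:ℕ):ℝ) * Real.log ((r+1 : ℕ) : ℝ) :=
      mul_le_mul_of_nonneg_left hL6 (by positivity)
    linarith
  have hrpow_nat : ∀ n : ℕ, ((5:ℝ)/6) ^ ((n : ℝ)) = ((5:ℝ)/6) ^ n := fun n =>
    Real.rpow_natCast _ n
  -- piece 2 : (5/6)^(pc 0 (2k)) ≤ (5/6)^q
  have hpc := pc_ge hk
  have hpiece2 : ((5:ℝ)/6) ^ (pc 0 (2 * (r+1))) ≤ ((5:ℝ)/6) ^ q := by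
    rw [← hrpow_nat]
    exact Real.rpow_le_rpow_of_exponent_ge (by norm_num) (by norm_num) hpc
  -- piece 1 : Chernoff part
  have hpiece1 : (2:ℝ) ^ (2 * (r+1)) * ((63:ℝ)/64) ^ r * ((1:ℝ)/6) ^ r ≤ ((5:ℝ)/6) ^ q := by
    have ha : ((5:ℝ)/6) ^ ((((r+1):ℕ)) : ℝ) ≤ ((5:ℝ)/6) ^ q :=
      Real.rpow_le_rpow_of_exponent_ge (by norm_num) (by norm_num) hqk
    rw [hrpow_nat] at ha
    refine le_trans ?_ ha
    have h80 : (24/5 : ℝ) ≤ (80/63 : ℝ) ^ r :=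
      le_trans (by norm_num) (pow_le_pow_right₀ (by norm_num) hr7)
    have hprod : (80/63 : ℝ) ^ r * (21/32 : ℝ) ^ r = ((5:ℝ)/6) ^ r := by
      rw [← mul_pow]
      norm_num
    have hcomb : (2:ℝ) ^ (2 * (r+1)) * ((63:ℝ)/64) ^ r * ((1:ℝ)/6) ^ r
        = 4 * (21/32 : ℝ) ^ r := by
      have hmm : (4:ℝ)^r * ((63:ℝ)/64)^r * ((1:ℝ)/6)^r = (21/32:ℝ)^r := by
        rw [← mul_pow, ← mul_pow]
        norm_num
      calc (2:ℝ) ^ (2 * (r+1)) * ((63:ℝ)/64) ^ r * ((1:ℝ)/6) ^ r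
          = 4 * ((4:ℝ)^r * ((63:ℝ)/64)^r * ((1:ℝ)/6)^r) := by
            rw [pow_mul]
            norm_num
            ring
        _ = 4 * (21/32:ℝ)^r := by rw [hmm]
    rw [hcomb, pow_succ]
    have hpos : (0:ℝ) ≤ (21/32:ℝ)^r := by positivity
    calc (4:ℝ) * (21/32:ℝ)^r = (24/5:ℝ) * (21/32:ℝ)^r * (5/6:ℝ) := by ring
      _ ≤ (80/63:ℝ)^r * (21/32:ℝ)^r * (5/6:ℝ) := by
          apply mul_le_mul_of_nonneg_right _ (by norm_num : (0:ℝ) ≤ 5/6)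
          exact mul_le_mul_of_nonneg_right h80 hpos
      _ = ((5:ℝ)/6)^r * (5/6:ℝ) := by rw [hprod]
  -- combine everything
  have hlow := low_count r (2 * (r+1))
  have hhigh := count_le r 0 (2 * (r+1))
  have h6r : ((6:ℝ)) ^ r * ((1:ℝ)/6) ^ r = 1 := by
    rw [← mul_pow]
    norm_num
  have hfinal : ((GS r).card : ℝ) * ((1:ℝ)/6) ^ r ≤ ((5:ℝ)/6) ^ q + ((5:ℝ)/6) ^ q := by
    have h16nn : (0:ℝ) ≤ ((1:ℝ)/6) ^ r := by positivity
    calc ((GS r).card : ℝ) * ((1:ℝ)/6) ^ r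
        ≤ ((((Fintype.piFinset fun _ : Fin r => Finset.Icc 1 6).filter
            fun y => psum y r < 2 * (r+1)).card : ℝ) + ((FS r 0 (2 * (r+1))).card : ℝ))
            * ((1:ℝ)/6) ^ r := mul_le_mul_of_nonneg_right hGsplit h16nn
      _ = (((Fintype.piFinset fun _ : Fin r => Finset.Icc 1 6).filter
            fun y => psum y r < 2 * (r+1)).card : ℝ) * ((1:ℝ)/6) ^ r
          + ((FS r 0 (2 * (r+1))).card : ℝ) * ((1:ℝ)/6) ^ r := by ring
      _ ≤ ((2:ℝ) ^ (2 * (r+1)) * ((63:ℝ)/64) ^ r) * ((1:ℝ)/6) ^ r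
          + ((6:ℝ) ^ r * ((5:ℝ)/6) ^ (pc 0 (2 * (r+1)))) * ((1:ℝ)/6) ^ r := by
          apply add_le_add
          · exact mul_le_mul_of_nonneg_right hlow h16nn
          · exact mul_le_mul_of_nonneg_right hhigh h16nn
      _ = (2:ℝ) ^ (2 * (r+1)) * ((63:ℝ)/64) ^ r * ((1:ℝ)/6) ^ r
          + ((5:ℝ)/6) ^ (pc 0 (2 * (r+1))) * ((6:ℝ) ^ r * ((1:ℝ)/6) ^ r) := by ring
      _ ≤ ((5:ℝ)/6) ^ q + ((5:ℝ)/6) ^ q := by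
          rw [h6r, mul_one]
          exact add_le_add hpiece1 hpiece2
  have hq0 : (0:ℝ) ≤ ((5:ℝ)/6) ^ q := Real.rpow_nonneg (by norm_num) q
  calc (μ {ω | ∀ i, 1 ≤ i → i < r + 1 → ¬ (diceSum X i ω).Prime}).toReal
      ≤ ((GS r).card : ℝ) * ((1:ℝ)/6) ^ r := hto
    _ ≤ ((5:ℝ)/6) ^ q + ((5:ℝ)/6) ^ q := hfinal
    _ = 2 * ((5:ℝ)/6) ^ q := by ring
    _ ≤ 5 * (((r+1):ℕ) : ℝ) * (1/3) * ((5:ℝ)/6) ^ q := by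
        apply mul_le_mul_of_nonneg_right _ hq0
        linarith
end
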